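/- arXiv:math/0602660 — 3 statements merged into one kernel-verified Lean document; each statement's English description precedes it below -/
import Mathlib

section
/- Let K be a commutative ring and let C_P ⊆ A_P be the K-subalgebra generated by all coefficients ψ_k(f), k = 1,...,n, f ∈ K[y_1,...,y_m], of characteristic polynomials of polynomials in the generic commuting matrices. Then the homomorphism Δ' : A_P → D (sending ξ'_{kij} to δ_{ij} x_{ik}) maps C_P surjectively onto the ring of multisymmetric functions D^{S_n}. -/
open MvPolynomial Matrix

/-- Evaluation of a (commutative) polynomial at an `m`-tuple of pairwise commuting
`n × n` matrices, as a `K`-algebra homomorphism into the matrix ring. -/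
noncomputable def matEval {K R : Type*} [CommRing K] [CommRing R] [Algebra K R] {n m : ℕ}
    (M : Fin m → Matrix (Fin n) (Fin n) R)
    (h : ∀ a ∈ Set.range M, ∀ b ∈ Set.range M, a * b = b * a) :
    MvPolynomial (Fin m) K →ₐ[K] Matrix (Fin n) (Fin n) R :=
  letI := Algebra.adjoinCommRingOfComm K h
  (Algebra.adjoin K (Set.range M)).val.comp
    (MvPolynomial.aeval fun k =>
      (⟨M k, Algebra.subset_adjoin ⟨k, rfl⟩⟩ : Algebra.adjoin K (Set.range M)))

namespace Stmt4Aux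

variable {K : Type*} [CommRing K] {n m : ℕ}

/-- permutation of the row index on `Fin n × Fin m` as an equiv -/
def pe (σ : Equiv.Perm (Fin n)) : (Fin n × Fin m) ≃ (Fin n × Fin m) :=
  σ.prodCongr (Equiv.refl _)

lemma pe_apply (σ : Equiv.Perm (Fin n)) (p : Fin n × Fin m) : pe σ p = (σ p.1, p.2) := rfl

/-- action on exponents -/
def act (σ : Equiv.Perm (Fin n)) (t : (Fin n × Fin m) →₀ ℕ) : (Fin n × Fin m) →₀ ℕ :=
  Finsupp.equivMapDomain (pe σ) t

lemma act_eq_mapDomain (σ : Equiv.Perm (Fin n)) (t : (Fin n × Fin m) →₀ ℕ) :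
    act σ t = Finsupp.mapDomain (pe σ) t := Finsupp.equivMapDomain_eq_mapDomain _ _

lemma act_apply (σ : Equiv.Perm (Fin n)) (t : (Fin n × Fin m) →₀ ℕ) (i : Fin n) (k : Fin m) :
    act σ t (i, k) = t (σ⁻¹ i, k) := rfl

lemma act_act (σ τ : Equiv.Perm (Fin n)) (t : (Fin n × Fin m) →₀ ℕ) :
    act σ (act τ t) = act (σ * τ) t := by
  ext p
  cases p with
  | mk i k => simp [act_apply, _root_.mul_inv_rev, Equiv.Perm.mul_apply]

lemma act_one (t : (Fin n × Fin m) →₀ ℕ) : act 1 t = t := by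
  ext ⟨i, k⟩; simp [act_apply]

lemma act_add (σ : Equiv.Perm (Fin n)) (t u : (Fin n × Fin m) →₀ ℕ) :
    act σ (t + u) = act σ t + act σ u := by
  ext ⟨i, k⟩; simp [act_apply]

lemma act_injective (σ : Equiv.Perm (Fin n)) :
    Function.Injective (act (m := m) σ) := by
  intro a b h
  have := congrArg (act σ⁻¹) h
  rwa [act_act, act_act, inv_mul_cancel, act_one, act_one] at this

/-- rename of a monomial under the row permutation -/
lemma rename_monomial_act (σ : Equiv.Perm (Fin n)) (t : (Fin n × Fin m) →₀ ℕ) (r : K) :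
    rename (fun p : Fin n × Fin m => (σ p.1, p.2)) (monomial t r) = monomial (act σ t) r := by
  rw [rename_monomial, act_eq_mapDomain]
  rfl

/-- the orbit of an exponent as a finset -/
noncomputable def orb (t : (Fin n × Fin m) →₀ ℕ) : Finset ((Fin n × Fin m) →₀ ℕ) :=
  Finset.image (fun σ => act σ t) Finset.univ

lemma mem_orb {t s : (Fin n × Fin m) →₀ ℕ} : s ∈ orb t ↔ ∃ σ, act σ t = s := by
  simp [orb]

lemma self_mem_orb (t : (Fin n × Fin m) →₀ ℕ) : t ∈ orb t :=
  mem_orb.2 ⟨1, act_one t⟩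

lemma act_mem_orb (σ : Equiv.Perm (Fin n)) (t : (Fin n × Fin m) →₀ ℕ) : act σ t ∈ orb t :=
  mem_orb.2 ⟨σ, rfl⟩

lemma image_act_orb (σ : Equiv.Perm (Fin n)) (t : (Fin n × Fin m) →₀ ℕ) :
    Finset.image (act σ) (orb t) = orb t := by
  apply Finset.Subset.antisymm
  · intro s hs
    rcases Finset.mem_image.1 hs with ⟨u, hu, rfl⟩
    rcases mem_orb.1 hu with ⟨τ, rfl⟩
    rw [act_act]; exact act_mem_orb _ _
  · intro s hs
    rcases mem_orb.1 hs with ⟨τ, rfl⟩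
    refine Finset.mem_image.2 ⟨act (σ⁻¹ * τ) t, act_mem_orb _ _, ?_⟩
    rw [act_act, mul_inv_cancel_left]

/-- the orbit sum -/
noncomputable def osum (K : Type*) [CommRing K] (t : (Fin n × Fin m) →₀ ℕ) :
    MvPolynomial (Fin n × Fin m) K :=
  ∑ s ∈ orb t, monomial s (1 : K)

lemma coeff_osum (t s : (Fin n × Fin m) →₀ ℕ) :
    coeff s (osum K t) = if s ∈ orb t then 1 else 0 := by
  rw [osum, MvPolynomial.coeff_sum]
  simp only [coeff_monomial]
  rw [Finset.sum_ite_eq' (orb t) s (fun _ => (1 : K))]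

/-- invariance predicate -/
def Inv (d : MvPolynomial (Fin n × Fin m) K) : Prop :=
  ∀ σ : Equiv.Perm (Fin n), rename (fun p : Fin n × Fin m => (σ p.1, p.2)) d = d

lemma inv_osum (t : (Fin n × Fin m) →₀ ℕ) : Inv (osum K t) := by
  intro σ
  rw [osum, map_sum]
  simp only [rename_monomial_act]
  conv_rhs => rw [← image_act_orb σ t]
  rw [Finset.sum_image (fun a _ b _ h => act_injective σ h)]

lemma coeff_act_of_inv {d : MvPolynomial (Fin n × Fin m) K} (hd : Inv d)
    (σ : Equiv.Perm (Fin n)) (t : (Fin n × Fin m) →₀ ℕ) :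
    coeff (act σ t) d = coeff t d := by
  conv_lhs => rw [← hd σ]
  rw [act_eq_mapDomain]
  exact coeff_rename_mapDomain _ (fun a b h => (pe σ).injective h) d t


lemma mem_of_inv (SA : Subalgebra K (MvPolynomial (Fin n × Fin m) K))
    (d : MvPolynomial (Fin n × Fin m) K) (hd : Inv d)
    (hs : ∀ s ∈ d.support, osum K s ∈ SA) : d ∈ SA := by
  generalize hN : d.support.card = N
  induction N using Nat.strong_induction_on generalizing d with
  | _ N ih =>
    by_cases h0 : d = 0
    · rw [h0]; exact SA.zero_mem
    · obtain ⟨t, ht⟩ := Finset.nonempty_of_ne_empty (mt support_eq_empty.1 h0)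
      set c := coeff t d with hc
      set d' := d - C c * osum K t with hd'def
      have horb : ∀ s ∈ orb t, coeff s d = c := by
        intro s hsorb
        rcases mem_orb.1 hsorb with ⟨σ, rfl⟩
        rw [coeff_act_of_inv hd]
      have hcoeff : ∀ s, coeff s d' = coeff s d - c * (if s ∈ orb t then 1 else 0) := by
        intro s
        rw [hd'def, coeff_sub, coeff_C_mul, coeff_osum]
      have hsup : d'.support ⊆ d.support := by
        intro s hsupp
        have hne := mem_support_iff.1 hsupp
        rw [hcoeff s] at hne
        by_cases horbs : s ∈ orb t
        · rw [if_pos horbs, mul_one, horb s horbs, sub_self] at hne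
          exact absurd rfl hne
        · rw [if_neg horbs, mul_zero, sub_zero] at hne
          exact mem_support_iff.2 hne
      have htd' : t ∉ d'.support := by
        rw [mem_support_iff, hcoeff t, if_pos (self_mem_orb t), mul_one, ← hc, sub_self]
        simp
      have hlt : d'.support.card < N := by
        rw [← hN]
        exact lt_of_le_of_lt (Finset.card_le_card fun s hsupp =>
          Finset.mem_erase.2 ⟨fun he => htd' (by rwa [he] at hsupp), hsup hsupp⟩)
          (Finset.card_erase_lt_of_mem ht)
      have hInv' : Inv d' := by
        intro σ
        rw [hd'def, map_sub, _root_.map_mul, rename_C, hd σ, inv_osum t σ]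
      have hmem' : d' ∈ SA := ih _ hlt d' hInv' (fun s hsupp => hs s (hsup hsupp)) rfl
      have : d = d' + C c * osum K t := by rw [hd'def]; ring
      rw [this]
      exact SA.add_mem hmem' (SA.mul_mem (by
        rw [show (C c : MvPolynomial (Fin n × Fin m) K) = algebraMap K _ c from rfl]
        exact SA.algebraMap_mem c) (hs t ht))


/-! ### rows and fibers -/

/-- embed a monomial into row `i` -/
noncomputable def emb (i : Fin n) (μ : Fin m →₀ ℕ) : (Fin n × Fin m) →₀ ℕ :=
  Finsupp.mapDomain (fun k => (i, k)) μ

lemma emb_apply (j : Fin n) (μ : Fin m →₀ ℕ) (i : Fin n) (k : Fin m) :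
    emb j μ (i, k) = if i = j then μ k else 0 := by
  rcases eq_or_ne i j with rfl | hij
  · rw [if_pos rfl, emb, Finsupp.mapDomain_apply (fun a b h => (Prod.ext_iff.1 h).2) μ k]
  · rw [if_neg hij, emb, Finsupp.mapDomain_notin_range]
    rintro ⟨k', hk'⟩
    exact hij ((Prod.ext_iff.1 hk').1.symm)

/-- extract row `i` -/
noncomputable def row (t : (Fin n × Fin m) →₀ ℕ) (i : Fin n) : Fin m →₀ ℕ :=
  Finsupp.comapDomain (fun k => (i, k)) t
    (Function.Injective.injOn (fun a b h => (Prod.ext_iff.1 h).2))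

lemma row_apply (t : (Fin n × Fin m) →₀ ℕ) (i : Fin n) (k : Fin m) :
    row t i k = t (i, k) := rfl

lemma ext_row {t u : (Fin n × Fin m) →₀ ℕ} (h : ∀ i, row t i = row u i) : t = u := by
  ext ⟨i, k⟩
  have := congrFun (congrArg (fun f => (f : (Fin m →₀ ℕ)) ∘ id) (h i)) k
  simpa [row_apply] using DFunLike.congr_fun (h i) k

lemma row_act (σ : Equiv.Perm (Fin n)) (t : (Fin n × Fin m) →₀ ℕ) (i : Fin n) :
    row (act σ t) i = row t (σ⁻¹ i) := by
  ext k; rw [row_apply, act_apply, row_apply]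

lemma row_add (t u : (Fin n × Fin m) →₀ ℕ) (i : Fin n) :
    row (t + u) i = row t i + row u i := by
  ext k; simp [row_apply]

/-- embed a monomial into each row of `S` -/
noncomputable def embS (S : Finset (Fin n)) (μ : Fin m →₀ ℕ) : (Fin n × Fin m) →₀ ℕ :=
  ∑ i ∈ S, emb i μ

lemma row_embS (S : Finset (Fin n)) (μ : Fin m →₀ ℕ) (i : Fin n) :
    row (embS S μ) i = if i ∈ S then μ else 0 := by
  ext k
  rw [row_apply, embS, Finsupp.finset_sum_apply]
  rw [Finset.sum_congr rfl (fun j _ => emb_apply j μ i k)]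
  rw [Finset.sum_ite_eq S i (fun _ => μ k)]
  split <;> simp

lemma act_embS (σ : Equiv.Perm (Fin n)) (S : Finset (Fin n)) (μ : Fin m →₀ ℕ) :
    act σ (embS S μ) = embS (S.image σ) μ := by
  apply ext_row
  intro i
  rw [row_act, row_embS, row_embS]
  congr 1
  simp only [Finset.mem_image, eq_iff_iff]
  constructor
  · intro h; exact ⟨σ⁻¹ i, h, by simp⟩
  · rintro ⟨j, hj, rfl⟩; simpa using hj

/-- the fiber of a row value -/
noncomputable def fib (t : (Fin n × Fin m) →₀ ℕ) (ν : Fin m →₀ ℕ) : Finset (Fin n) :=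
  Finset.univ.filter (fun i => row t i = ν)

lemma mem_fib {t : (Fin n × Fin m) →₀ ℕ} {ν : Fin m →₀ ℕ} {i : Fin n} :
    i ∈ fib t ν ↔ row t i = ν := by
  simp [fib]

/-- the set of active rows -/
noncomputable def ac (t : (Fin n × Fin m) →₀ ℕ) : Finset (Fin n) :=
  Finset.univ.filter (fun i => row t i ≠ 0)

lemma mem_ac {t : (Fin n × Fin m) →₀ ℕ} {i : Fin n} : i ∈ ac t ↔ row t i ≠ 0 := by
  simp [ac]

/-- the number of active rows -/
noncomputable def rcnt (t : (Fin n × Fin m) →₀ ℕ) : ℕ := (ac t).card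

lemma ac_act (σ : Equiv.Perm (Fin n)) (t : (Fin n × Fin m) →₀ ℕ) :
    ac (act σ t) = (ac t).image σ := by
  ext i
  rw [mem_ac, row_act]
  simp only [Finset.mem_image]
  constructor
  · intro h; exact ⟨σ⁻¹ i, mem_ac.2 h, by simp⟩
  · rintro ⟨j, hj, rfl⟩; simpa using mem_ac.1 hj

lemma fib_act (σ : Equiv.Perm (Fin n)) (t : (Fin n × Fin m) →₀ ℕ) (ν : Fin m →₀ ℕ) :
    fib (act σ t) ν = (fib t ν).image σ := by
  ext i
  rw [mem_fib, row_act]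
  simp only [Finset.mem_image]
  constructor
  · intro h; exact ⟨σ⁻¹ i, mem_fib.2 h, by simp⟩
  · rintro ⟨j, hj, rfl⟩; simpa using mem_fib.1 hj

/-- equal fiber cardinalities imply same orbit -/
lemma mem_orb_of_fib_card (t u : (Fin n × Fin m) →₀ ℕ)
    (h : ∀ ν, (fib t ν).card = (fib u ν).card) : u ∈ orb t := by
  classical
  have hcard : ∀ ν : Fin m →₀ ℕ,
      Fintype.card {i // row u i = ν} = Fintype.card {i // row t i = ν} := by
    intro ν
    rw [Fintype.card_subtype, Fintype.card_subtype]
    have := (h ν).symm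
    simpa [fib] using this
  let e : Fin n ≃ Fin n :=
    Equiv.ofFiberEquiv (f := row u) (g := row t) (fun ν => Fintype.equivOfCardEq (hcard ν))
  have he : ∀ i, row t (e i) = row u i := fun i => Equiv.ofFiberEquiv_map _ i
  refine mem_orb.2 ⟨(e : Equiv.Perm (Fin n))⁻¹, ?_⟩
  apply ext_row
  intro i
  rw [row_act]
  simpa using he i


/-! ### the elementary multisymmetric polynomials and the key induction -/

/-- elementary multisymmetric polynomial attached to the monomial `μ` -/
noncomputable def Esym (K : Type*) [CommRing K] {n m : ℕ} (a : ℕ) (μ : Fin m →₀ ℕ) :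
    MvPolynomial (Fin n × Fin m) K :=
  ∑ S ∈ Finset.powersetCard a Finset.univ, monomial (embS S μ) (1 : K)

lemma inv_Esym (a : ℕ) (μ : Fin m →₀ ℕ) : Inv (Esym K (n := n) a μ) := by
  intro σ
  rw [Esym, map_sum]
  simp only [rename_monomial_act, act_embS]
  have himg : Finset.image (fun S => Finset.image σ S) (Finset.powersetCard a
      (Finset.univ : Finset (Fin n))) = Finset.powersetCard a Finset.univ := by
    apply Finset.Subset.antisymm
    · intro S hS
      rcases Finset.mem_image.1 hS with ⟨T, hT, rfl⟩
      rw [Finset.mem_powersetCard_univ] at hT ⊢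
      rw [Finset.card_image_of_injective _ σ.injective, hT]
    · intro S hS
      refine Finset.mem_image.2 ⟨S.image ⇑σ.symm, ?_, ?_⟩
      · rw [Finset.mem_powersetCard_univ] at hS ⊢
        rw [Finset.card_image_of_injective _ σ.symm.injective, hS]
      · rw [Finset.image_image]
        ext i; simp
  conv_rhs => rw [← himg]
  rw [Finset.sum_image (fun S _ T _ h => Finset.image_injective σ.injective h)]

lemma ac_add_subset (t u : (Fin n × Fin m) →₀ ℕ) : ac (t + u) ⊆ ac t ∪ ac u := by
  intro i hi
  rw [mem_ac, row_add] at hi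
  rw [Finset.mem_union, mem_ac, mem_ac]
  by_contra hc
  push_neg at hc
  rw [hc.1, hc.2, add_zero] at hi
  exact hi rfl

lemma ac_embS_subset (S : Finset (Fin n)) (μ : Fin m →₀ ℕ) : ac (embS S μ) ⊆ S := by
  intro i hi
  rw [mem_ac, row_embS] at hi
  by_contra hc
  rw [if_neg hc] at hi
  exact hi rfl

/-- generic fiber-cardinality comparison -/
lemma fib_card_cond {ρ ρ₂ : Fin n → (Fin m →₀ ℕ)} {B B₂ : Finset (Fin n)} {μ : Fin m →₀ ℕ}
    (hμ : μ ≠ 0)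
    (hB : ∀ i ∈ B, ρ i = 0) (hB₂ : ∀ i ∈ B₂, ρ₂ i = 0)
    (hnoμ : ∀ i, ρ i ≠ μ) (hnoμ₂ : ∀ i, ρ₂ i ≠ μ)
    (hcard : ∀ ν, (Finset.univ.filter (fun i => ρ i = ν)).card
                = (Finset.univ.filter (fun i => ρ₂ i = ν)).card)
    (hBB : B.card = B₂.card) (ν : Fin m →₀ ℕ) :
    (Finset.univ.filter (fun i => (if i ∈ B then μ else ρ i) = ν)).card
      = (Finset.univ.filter (fun i => (if i ∈ B₂ then μ else ρ₂ i) = ν)).card := by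
  classical
  have key : ∀ (ρ' : Fin n → (Fin m →₀ ℕ)) (B' : Finset (Fin n)),
      (∀ i ∈ B', ρ' i = 0) → (∀ i, ρ' i ≠ μ) →
      Finset.univ.filter (fun i => (if i ∈ B' then μ else ρ' i) = ν)
        = if ν = μ then B' else (Finset.univ.filter (fun i => ρ' i = ν)) \ B' := by
    intro ρ' B' hB' hno
    ext i
    simp only [Finset.mem_filter, Finset.mem_univ, true_and]
    by_cases hiB : i ∈ B'
    · rw [if_pos hiB]
      rcases eq_or_ne ν μ with rfl | hνμ
      · simp [hiB]
      · rw [if_neg hνμ]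
        simp only [Finset.mem_sdiff, Finset.mem_filter, Finset.mem_univ, true_and]
        constructor
        · intro h; exact absurd h.symm hνμ
        · intro h; exact absurd hiB h.2
    · rw [if_neg hiB]
      rcases eq_or_ne ν μ with rfl | hνμ
      · rw [if_pos rfl]
        constructor
        · intro h; exact absurd h (hno i)
        · intro h; exact absurd h hiB
      · rw [if_neg hνμ]
        simp only [Finset.mem_sdiff, Finset.mem_filter, Finset.mem_univ, true_and]
        exact ⟨fun h => ⟨h, hiB⟩, fun h => h.1⟩
  rw [key ρ B hB hnoμ, key ρ₂ B₂ hB₂ hnoμ₂]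
  rcases eq_or_ne ν μ with rfl | hνμ
  · rw [if_pos rfl, if_pos rfl]; exact hBB
  · rw [if_neg hνμ, if_neg hνμ]
    rcases eq_or_ne ν 0 with rfl | hν0
    · rw [Finset.card_sdiff_of_subset (fun i hi => Finset.mem_filter.2 ⟨Finset.mem_univ i, hB i hi⟩),
        Finset.card_sdiff_of_subset (fun i hi => Finset.mem_filter.2 ⟨Finset.mem_univ i, hB₂ i hi⟩),
        hcard 0, hBB]
    · have hd1 : Disjoint (Finset.univ.filter (fun i => ρ i = ν)) B :=
        Finset.disjoint_left.2 fun i hif hiB =>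
          hν0 (((Finset.mem_filter.1 hif).2.symm).trans (hB i hiB))
      have hd2 : Disjoint (Finset.univ.filter (fun i => ρ₂ i = ν)) B₂ :=
        Finset.disjoint_left.2 fun i hif hiB =>
          hν0 (((Finset.mem_filter.1 hif).2.symm).trans (hB₂ i hiB))
      rw [Finset.sdiff_eq_self_of_disjoint hd1, Finset.sdiff_eq_self_of_disjoint hd2]
      exact hcard ν


lemma row_zero (i : Fin n) : row (0 : (Fin n × Fin m) →₀ ℕ) i = 0 := by
  ext k; rfl

lemma osum_zero : osum K (0 : (Fin n × Fin m) →₀ ℕ) = 1 := by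
  have horb : orb (0 : (Fin n × Fin m) →₀ ℕ) = {0} := by
    apply Finset.Subset.antisymm
    · intro s hs
      rcases mem_orb.1 hs with ⟨σ, rfl⟩
      simp only [Finset.mem_singleton]
      apply ext_row; intro i; rw [row_act, row_zero, row_zero]
    · intro s hs
      rw [Finset.mem_singleton] at hs
      rw [hs]; exact self_mem_orb 0
  rw [osum, horb, Finset.sum_singleton, monomial_zero', C_1]

lemma osum_mem (SA : Subalgebra K (MvPolynomial (Fin n × Fin m) K))
    (hE : ∀ a : ℕ, ∀ μ : Fin m →₀ ℕ, 1 ≤ a → a ≤ n → Esym K a μ ∈ SA) :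
    ∀ (N : ℕ) (t : (Fin n × Fin m) →₀ ℕ), rcnt t ≤ N → osum K t ∈ SA := by
  intro N
  induction N with
  | zero =>
    intro t ht
    have h0 : t = 0 := by
      apply ext_row; intro i
      by_contra hrow
      have hi : i ∈ ac t := mem_ac.2 (fun h => hrow (by rw [h, row_zero]))
      have hpos : 0 < rcnt t := Finset.card_pos.2 ⟨i, hi⟩
      omega
    rw [h0, osum_zero]; exact SA.one_mem
  | succ N ih =>
    intro t ht
    by_cases hle : rcnt t ≤ N
    · exact ih t hle
    have hr : rcnt t = N + 1 := le_antisymm ht (not_le.1 hle)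
    obtain ⟨i₀, hi₀⟩ : (ac t).Nonempty :=
      Finset.card_pos.1 (by rw [show (ac t).card = rcnt t from rfl, hr]; omega)
    set μ := row t i₀ with hμdef
    have hμ : μ ≠ 0 := mem_ac.1 hi₀
    set A := fib t μ with hAdef
    have hi₀A : i₀ ∈ A := mem_fib.2 rfl
    set a := A.card with hadef
    have ha1 : 1 ≤ a := Finset.card_pos.2 ⟨i₀, hi₀A⟩
    have han : a ≤ n := le_trans (Finset.card_le_univ A) (by simp)
    classical
    set t' := Finsupp.filter (fun p : Fin n × Fin m => p.1 ∉ A) t with ht'def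
    have hrow' : ∀ i, row t' i = if i ∈ A then 0 else row t i := by
      intro i; ext k
      rw [row_apply, ht'def, Finsupp.filter_apply]
      by_cases hiA : i ∈ A
      · rw [if_neg (by simpa using hiA), if_pos hiA]; rfl
      · rw [if_pos (by simpa using hiA), if_neg hiA, row_apply]
    have hArow : ∀ i ∈ A, row t i = μ := fun i hi => mem_fib.1 hi
    have hrowt : ∀ i, row t i = if i ∈ A then μ else row t' i := by
      intro i
      by_cases hiA : i ∈ A
      · rw [if_pos hiA]; exact hArow i hiA
      · rw [if_neg hiA, hrow' i, if_neg hiA]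
    have hno' : ∀ i, row t' i ≠ μ := by
      intro i
      rw [hrow' i]
      by_cases hiA : i ∈ A
      · rw [if_pos hiA]; exact fun h => hμ h.symm
      · rw [if_neg hiA]; exact fun h => hiA (mem_fib.2 h)
    have hA0 : ∀ i ∈ A, row t' i = 0 := fun i hi => by rw [hrow' i, if_pos hi]
    have hact' : ac t' = ac t \ A := by
      ext i
      by_cases hiA : i ∈ A
      · simp only [mem_ac, hrow' i, if_pos hiA, Finset.mem_sdiff, mem_ac]
        simp [hiA]
      · simp only [mem_ac, hrow' i, if_neg hiA, Finset.mem_sdiff, mem_ac]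
        simp [hiA]
    have hAsub : A ⊆ ac t := fun i hi => mem_ac.2 (by rw [hArow i hi]; exact hμ)
    have hrcnt' : rcnt t' = N + 1 - a := by
      rw [rcnt, hact', Finset.card_sdiff_of_subset hAsub, ← rcnt, hr]
    have hdecomp : t = embS A μ + t' := by
      apply ext_row; intro i
      rw [row_add, row_embS, hrowt i]
      by_cases hiA : i ∈ A
      · rw [if_pos hiA, if_pos hiA, hA0 i hiA, add_zero]
      · rw [if_neg hiA, if_neg hiA, zero_add]
    have horb' : ∀ s ∈ orb t', (∀ i, row s i ≠ μ) ∧ (∀ ν, (fib s ν).card = (fib t' ν).card)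
        ∧ (ac s).card = rcnt t' := by
      intro s hs
      rcases mem_orb.1 hs with ⟨σ, rfl⟩
      refine ⟨fun i => by rw [row_act]; exact hno' _, fun ν => by
        rw [fib_act, Finset.card_image_of_injective _ σ.injective], by
        rw [ac_act, Finset.card_image_of_injective _ σ.injective]; rfl⟩
    have hS0 : ∀ (S : Finset (Fin n)) (s : (Fin n × Fin m) →₀ ℕ), Disjoint S (ac s) →
        ∀ i ∈ S, row s i = 0 := by
      intro S s hdisj i hi
      by_contra hc
      exact (Finset.disjoint_left.1 hdisj hi) (mem_ac.2 hc)
    have hmem : ∀ (S : Finset (Fin n)), S.card = a → ∀ s ∈ orb t', Disjoint S (ac s) →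
        embS S μ + s ∈ orb t := by
      intro S hS s hs hdisj
      obtain ⟨hnoμs, hfibs, hacs⟩ := horb' s hs
      have hrowu : ∀ i, row (embS S μ + s) i = if i ∈ S then μ else row s i := by
        intro i
        rw [row_add, row_embS]
        by_cases hiS : i ∈ S
        · rw [if_pos hiS, if_pos hiS, hS0 S s hdisj i hiS, add_zero]
        · rw [if_neg hiS, if_neg hiS, zero_add]
      apply mem_orb_of_fib_card
      intro ν
      have h1 : fib t ν = Finset.univ.filter (fun i => (if i ∈ A then μ else row t' i) = ν) := by
        ext i; rw [mem_fib, Finset.mem_filter, ← hrowt i]; simp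
      have h2 : fib (embS S μ + s) ν
          = Finset.univ.filter (fun i => (if i ∈ S then μ else row s i) = ν) := by
        ext i; rw [mem_fib, Finset.mem_filter, ← hrowu i]; simp
      rw [h1, h2]
      exact fib_card_cond hμ hA0 (hS0 S s hdisj) hno' hnoμs (fun ν' => (hfibs ν').symm)
        (by rw [hS]) ν
    have hfibu : ∀ (S : Finset (Fin n)) (s : (Fin n × Fin m) →₀ ℕ), s ∈ orb t' →
        Disjoint S (ac s) → fib (embS S μ + s) μ = S := by
      intro S s hs hdisj
      obtain ⟨hnoμs, _, _⟩ := horb' s hs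
      ext i
      rw [mem_fib, row_add, row_embS]
      by_cases hiS : i ∈ S
      · simp [hiS, hS0 S s hdisj i hiS]
      · simp [hiS, hnoμs i]
    set P := (Finset.powersetCard a (Finset.univ : Finset (Fin n))) ×ˢ orb t' with hPdef
    set Dp := fun p : Finset (Fin n) × ((Fin n × Fin m) →₀ ℕ) => Disjoint p.1 (ac p.2)
      with hDpdef
    have hexp : Esym K a μ * osum K t'
        = ∑ p ∈ P, monomial (embS p.1 μ + p.2) (1 : K) := by
      rw [Esym, osum, Finset.sum_mul_sum, hPdef, Finset.sum_product]
      exact Finset.sum_congr rfl fun S _ => Finset.sum_congr rfl fun s _ => by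
        rw [monomial_mul, one_mul]
    have hsplit : ∑ p ∈ P, monomial (embS p.1 μ + p.2) (1 : K)
        = ∑ p ∈ P.filter Dp, monomial (embS p.1 μ + p.2) (1 : K)
          + ∑ p ∈ P.filter (fun p => ¬ Dp p), monomial (embS p.1 μ + p.2) (1 : K) :=
      (Finset.sum_filter_add_sum_filter_not P Dp _).symm
    have hpair : ∀ p ∈ P.filter Dp, p.1.card = a ∧ p.2 ∈ orb t' ∧ Disjoint p.1 (ac p.2) := by
      intro p hp
      rw [Finset.mem_filter, hPdef, Finset.mem_product] at hp
      exact ⟨Finset.mem_powersetCard_univ.1 hp.1.1, hp.1.2, hp.2⟩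
    have hdisjsum : ∑ p ∈ P.filter Dp, monomial (embS p.1 μ + p.2) (1 : K) = osum K t := by
      rw [osum]
      apply Finset.sum_bij (i := fun p _ => embS p.1 μ + p.2)
      · intro p hp
        obtain ⟨h1, h2, h3⟩ := hpair p hp
        exact hmem p.1 h1 p.2 h2 h3
      · intro p hp q hq heq
        obtain ⟨hp1, hp2, hp3⟩ := hpair p hp
        obtain ⟨hq1, hq2, hq3⟩ := hpair q hq
        have hSS : p.1 = q.1 := by
          rw [← hfibu p.1 p.2 hp2 hp3, ← hfibu q.1 q.2 hq2 hq3, heq]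
        have hss : p.2 = q.2 := by
          rw [hSS] at heq
          exact add_left_cancel heq
        exact Prod.ext hSS hss
      · intro u hu
        rcases mem_orb.1 hu with ⟨σ, rfl⟩
        have hdisjA : Disjoint (A.image σ) (ac (act σ t')) := by
          rw [ac_act, Finset.disjoint_left]
          rintro i hiA hiac
          rcases Finset.mem_image.1 hiA with ⟨x, hx, rfl⟩
          rcases Finset.mem_image.1 hiac with ⟨y, hy, hxy⟩
          have : y = x := σ.injective hxy
          rw [this, hact', Finset.mem_sdiff] at hy
          exact hy.2 hx
        refine ⟨(A.image σ, act σ t'), Finset.mem_filter.2 ⟨?_, hdisjA⟩, ?_⟩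
        · rw [hPdef, Finset.mem_product]
          exact ⟨Finset.mem_powersetCard_univ.2
            (Finset.card_image_of_injective _ σ.injective), act_mem_orb σ t'⟩
        · show embS (Finset.image (⇑σ) A) μ + act σ t' = act σ t
          conv_rhs => rw [hdecomp]
          rw [act_add, act_embS]
      · intro p hp; rfl
    set Rem := ∑ p ∈ P.filter (fun p => ¬ Dp p), monomial (embS p.1 μ + p.2) (1 : K)
      with hRemdef
    have hosum_eq : osum K t = Esym K a μ * osum K t' - Rem := by
      rw [hexp, hsplit, hdisjsum]; ring
    have hRemInv : Inv Rem := by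
      have hR2 : Rem = Esym K a μ * osum K t' - osum K t := by rw [hosum_eq]; ring
      intro σ
      rw [hR2, map_sub, _root_.map_mul, inv_Esym a μ σ, inv_osum t' σ, inv_osum t σ]
    have hRemSupp : ∀ u ∈ Rem.support, rcnt u ≤ N := by
      intro u hu
      rw [hRemdef] at hu
      obtain ⟨p, hp, hup⟩ := Finset.mem_biUnion.1 (MvPolynomial.support_sum hu)
      have hupu : u = embS p.1 μ + p.2 := by
        by_cases h1 : (1 : K) = 0
        · rw [support_monomial, if_pos h1] at hup
          exact absurd hup (Finset.notMem_empty u)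
        · rw [support_monomial, if_neg h1] at hup
          exact Finset.mem_singleton.1 hup
      rw [Finset.mem_filter] at hp
      obtain ⟨hpP, hpD⟩ := hp
      rw [hPdef, Finset.mem_product] at hpP
      have hcard1 : p.1.card = a := Finset.mem_powersetCard_univ.1 hpP.1
      obtain ⟨-, -, hacs⟩ := horb' p.2 hpP.2
      have hsubu : ac u ⊆ p.1 ∪ ac p.2 := by
        rw [hupu]
        exact subset_trans (ac_add_subset _ _)
          (Finset.union_subset_union (ac_embS_subset _ _) subset_rfl)
      have hinter : (p.1 ∩ ac p.2).Nonempty := Finset.not_disjoint_iff_nonempty_inter.1 hpD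
      have hui : (p.1 ∪ ac p.2).card + (p.1 ∩ ac p.2).card = p.1.card + (ac p.2).card :=
        Finset.card_union_add_card_inter p.1 (ac p.2)
      have h1i : 1 ≤ (p.1 ∩ ac p.2).card := Finset.card_pos.2 hinter
      have hle2 : (ac u).card ≤ (p.1 ∪ ac p.2).card := Finset.card_le_card hsubu
      have haN : a ≤ rcnt t := Finset.card_le_card hAsub
      have hgoal : rcnt u = (ac u).card := rfl
      rw [hrcnt'] at hacs
      omega
    have hRemMem : Rem ∈ SA := mem_of_inv SA Rem hRemInv (fun u hu => ih u (hRemSupp u hu))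
    have ht'mem : osum K t' ∈ SA := ih t' (by rw [hrcnt']; omega)
    rw [hosum_eq]
    exact SA.sub_mem (SA.mul_mem (hE a μ ha1 han) ht'mem) hRemMem

/-- every invariant polynomial lies in a subalgebra containing all `Esym` -/
lemma inv_mem (SA : Subalgebra K (MvPolynomial (Fin n × Fin m) K))
    (hE : ∀ a : ℕ, ∀ μ : Fin m →₀ ℕ, 1 ≤ a → a ≤ n → Esym K a μ ∈ SA)
    (d : MvPolynomial (Fin n × Fin m) K) (hd : Inv d) : d ∈ SA :=
  mem_of_inv SA d hd (fun s _ => osum_mem SA hE (rcnt s) s le_rfl)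


/-! ### elementary multisymmetric functions of evaluations of a polynomial -/

lemma prod_monomial_one (S : Finset (Fin n)) (g : Fin n → ((Fin n × Fin m) →₀ ℕ)) :
    ∏ i ∈ S, (monomial (g i) (1 : K)) = monomial (∑ i ∈ S, g i) (1 : K) := by
  induction S using Finset.induction with
  | empty => simp [monomial_zero', C_1]
  | insert _ _ hnot ih =>
    rw [Finset.prod_insert hnot, Finset.sum_insert hnot, ih, monomial_mul, one_mul]

/-- the `k`-th elementary multisymmetric polynomial of the evaluations of `f`
on the rows of variables -/
noncomputable def EsymP (K : Type*) [CommRing K] {n m : ℕ} (k : ℕ) (f : MvPolynomial (Fin m) K) :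
    MvPolynomial (Fin n × Fin m) K :=
  ∑ S ∈ Finset.powersetCard k (Finset.univ : Finset (Fin n)),
    ∏ i ∈ S, rename (fun k' => (i, k')) f

lemma EsymP_monomial (a : ℕ) (μ : Fin m →₀ ℕ) :
    EsymP K (n := n) a (monomial μ (1 : K)) = Esym K a μ := by
  rw [EsymP, Esym]
  refine Finset.sum_congr rfl fun S _ => ?_
  rw [show (∏ i ∈ S, rename (fun k' => (i, k')) (monomial μ (1 : K)))
      = ∏ i ∈ S, (monomial (emb i μ) (1 : K)) from
    Finset.prod_congr rfl fun i _ => by rw [rename_monomial]; rfl]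
  rw [prod_monomial_one]
  rfl

lemma image_powersetCard (σ : Equiv.Perm (Fin n)) (a : ℕ) :
    Finset.image (fun S => Finset.image σ S)
      (Finset.powersetCard a (Finset.univ : Finset (Fin n)))
      = Finset.powersetCard a Finset.univ := by
  apply Finset.Subset.antisymm
  · intro S hS
    rcases Finset.mem_image.1 hS with ⟨T, hT, rfl⟩
    rw [Finset.mem_powersetCard_univ] at hT ⊢
    rw [Finset.card_image_of_injective _ σ.injective, hT]
  · intro S hS
    refine Finset.mem_image.2 ⟨S.image ⇑σ.symm, ?_, ?_⟩
    · rw [Finset.mem_powersetCard_univ] at hS ⊢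
      rw [Finset.card_image_of_injective _ σ.symm.injective, hS]
    · rw [Finset.image_image]
      ext i; simp

lemma inv_EsymP (k : ℕ) (f : MvPolynomial (Fin m) K) : Inv (EsymP K (n := n) k f) := by
  intro σ
  rw [EsymP, map_sum]
  have hterm : ∀ S : Finset (Fin n),
      (rename (fun p : Fin n × Fin m => (σ p.1, p.2)))
          (∏ i ∈ S, rename (fun k' => (i, k')) f)
        = ∏ i ∈ Finset.image σ S, rename (fun k' => (i, k')) f := by
    intro S
    rw [map_prod, Finset.prod_image (fun i _ j _ h => σ.injective h)]
    refine Finset.prod_congr rfl fun i _ => ?_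
    rw [rename_rename]
    rfl
  rw [Finset.sum_congr rfl fun S _ => hterm S]
  conv_rhs => rw [← image_powersetCard σ k]
  rw [Finset.sum_image (fun S _ T _ h => Finset.image_injective σ.injective h)]

/-- the invariant subalgebra -/
def invSub (K : Type*) [CommRing K] (n m : ℕ) :
    Subalgebra K (MvPolynomial (Fin n × Fin m) K) where
  carrier := {d | Inv d}
  mul_mem' := fun ha hb σ => by rw [_root_.map_mul, ha σ, hb σ]
  add_mem' := fun ha hb σ => by rw [map_add, ha σ, hb σ]
  algebraMap_mem' := fun c σ => by
    rw [MvPolynomial.algebraMap_eq, rename_C]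

lemma mem_invSub {d : MvPolynomial (Fin n × Fin m) K} : d ∈ invSub K n m ↔ Inv d := Iff.rfl

/-- characteristic polynomial of a diagonal matrix -/
lemma charpoly_diagonal (d : Fin n → K) :
    (Matrix.diagonal d).charpoly = ∏ i, (Polynomial.X - Polynomial.C (d i)) := by
  have h : charmatrix (Matrix.diagonal d)
      = Matrix.diagonal (fun i => Polynomial.X - Polynomial.C (d i)) := by
    ext i j
    by_cases hij : i = j
    · subst hij
      rw [charmatrix_apply_eq, Matrix.diagonal_apply_eq, Matrix.diagonal_apply_eq]
    · rw [charmatrix_apply_ne _ _ _ hij, Matrix.diagonal_apply_ne _ hij,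
        Matrix.diagonal_apply_ne _ hij, map_zero, neg_zero]
  rw [Matrix.charpoly, h, Matrix.det_diagonal]

/-- coefficients of `∏ (X - C (F i))` -/
lemma coeff_prod_X_sub_C (F : Fin n → K) (k : ℕ) (hk : k ≤ n) :
    (-1 : K) ^ k * (∏ i, (Polynomial.X - Polynomial.C (F i))).coeff (n - k)
      = ∑ S ∈ Finset.powersetCard k (Finset.univ : Finset (Fin n)), ∏ i ∈ S, F i := by
  have h1 : (∏ i, (Polynomial.X - Polynomial.C (F i)))
      = ∏ i, (Polynomial.X + Polynomial.C (-(F i))) := by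
    refine Finset.prod_congr rfl fun i _ => ?_
    rw [map_neg, sub_eq_add_neg]
  have hcard : n - k ≤ (Finset.univ : Finset (Fin n)).card := by
    simpa using Nat.sub_le n k
  rw [h1, Finset.prod_X_add_C_coeff _ _ hcard]
  have hcc : (Finset.univ : Finset (Fin n)).card - (n - k) = k := by
    simp; omega
  rw [hcc, Finset.mul_sum]
  refine Finset.sum_congr rfl fun S hS => ?_
  have hScard : S.card = k := Finset.mem_powersetCard_univ.1 hS
  rw [show (∏ i ∈ S, -(F i)) = ∏ i ∈ S, ((-1) * F i) from
      Finset.prod_congr rfl fun i _ => by ring,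
    Finset.prod_mul_distrib, Finset.prod_const, hScard, ← mul_assoc, ← mul_pow]
  ring_nf

end Stmt4Aux

open Stmt4Aux in
/-- `Δ' : A_P → D` maps the subalgebra `C_P` generated by the
characteristic polynomial coefficients `ψ_k(f)` of polynomials `f` in the generic
commuting matrices surjectively onto the ring of multisymmetric functions `D^{Sₙ}`:
the image of `C_P` under `Δ'` equals the set of `Sₙ`-invariants of `D`. -/
theorem stmt4 (K : Type*) [CommRing K] (n m : ℕ)
    (ξ : Fin m → Matrix (Fin n) (Fin n) (MvPolynomial (Fin m × Fin n × Fin n) K))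
    (hξ : ξ = fun k => Matrix.of fun i j => MvPolynomial.X (k, i, j))
    (I : Ideal (MvPolynomial (Fin m × Fin n × Fin n) K))
    (hI : I = Ideal.span {a | ∃ k h i j, a = (ξ k * ξ h - ξ h * ξ k) i j})
    (ξ' : Fin m → Matrix (Fin n) (Fin n) (MvPolynomial (Fin m × Fin n × Fin n) K ⧸ I))
    (hξ' : ξ' = fun k => (ξ k).map (Ideal.Quotient.mk I))
    (hcomm : ∀ a ∈ Set.range ξ', ∀ b ∈ Set.range ξ', a * b = b * a)
    (Δ' : (MvPolynomial (Fin m × Fin n × Fin n) K ⧸ I) →ₐ[K]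
      MvPolynomial (Fin n × Fin m) K)
    (hΔ' : ∀ p : Fin m × Fin n × Fin n,
      Δ' (Ideal.Quotient.mk I (MvPolynomial.X p)) =
        if p.2.1 = p.2.2 then MvPolynomial.X (p.2.1, p.1) else 0)
    (CP : Subalgebra K (MvPolynomial (Fin m × Fin n × Fin n) K ⧸ I))
    (hCP : CP = Algebra.adjoin K
      {a | ∃ f : MvPolynomial (Fin m) K, ∃ k ∈ Finset.Icc 1 n,
        a = (-1) ^ k * (matEval ξ' hcomm f).charpoly.coeff (n - k)}) :
    Δ' '' (CP : Set (MvPolynomial (Fin m × Fin n × Fin n) K ⧸ I)) =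
      {d | ∀ σ : Equiv.Perm (Fin n),
        MvPolynomial.rename (fun p : Fin n × Fin m => (σ p.1, p.2)) d = d} := by
  classical
  have hmatX : ∀ j, matEval ξ' hcomm (X j : MvPolynomial (Fin m) K) = ξ' j := by
    intro j
    simp [matEval]
  have hhom : (AlgHom.mapMatrix Δ').comp (matEval ξ' hcomm)
      = (Matrix.diagonalAlgHom K).comp
          (Pi.algHom K _ (fun i : Fin n => rename (fun k' : Fin m => (i, k')))) := by
    apply MvPolynomial.algHom_ext
    intro j
    rw [AlgHom.comp_apply, AlgHom.comp_apply, hmatX]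
    ext i i'
    rw [AlgHom.mapMatrix_apply, Matrix.map_apply]
    have hentry : ξ' j i i' = Ideal.Quotient.mk I (MvPolynomial.X (j, i, i')) := by
      rw [hξ']
      simp only [Matrix.map_apply]
      rw [hξ]
      rfl
    rw [hentry, hΔ' (j, i, i')]
    simp only [Pi.algHom_apply, rename_X, Matrix.diagonalAlgHom_apply, Matrix.diagonal_apply]
  have hmap : ∀ f : MvPolynomial (Fin m) K,
      (matEval ξ' hcomm f).map ⇑Δ'
        = Matrix.diagonal (fun i : Fin n => rename (fun k' : Fin m => (i, k')) f) := by
    intro f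
    have := AlgHom.congr_fun hhom f
    rw [AlgHom.comp_apply, AlgHom.comp_apply, AlgHom.mapMatrix_apply] at this
    rw [this]
    rfl
  have hΔgen : ∀ (f : MvPolynomial (Fin m) K) (k : ℕ), k ∈ Finset.Icc 1 n →
      Δ' ((-1) ^ k * (matEval ξ' hcomm f).charpoly.coeff (n - k)) = EsymP K k f := by
    intro f k hk
    rw [Finset.mem_Icc] at hk
    rw [_root_.map_mul, map_pow, map_neg, _root_.map_one]
    have h1 : Δ' ((matEval ξ' hcomm f).charpoly.coeff (n - k))
        = ((matEval ξ' hcomm f).charpoly.map Δ'.toRingHom).coeff (n - k) := by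
      rw [Polynomial.coeff_map]
      rfl
    have h2 : ((matEval ξ' hcomm f).map ⇑Δ'.toRingHom).charpoly
        = (matEval ξ' hcomm f).charpoly.map Δ'.toRingHom :=
      Matrix.charpoly_map _ Δ'.toRingHom
    have h3 : ((matEval ξ' hcomm f).map ⇑Δ'.toRingHom)
        = Matrix.diagonal (fun i : Fin n => rename (fun k' : Fin m => (i, k')) f) := by
      rw [show ⇑Δ'.toRingHom = ⇑Δ' from rfl, hmap f]
    rw [h1, ← h2, h3, Stmt4Aux.charpoly_diagonal]
    rw [EsymP]
    exact coeff_prod_X_sub_C (fun i : Fin n => rename (fun k' : Fin m => (i, k')) f) k hk.2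
  set G : Set (MvPolynomial (Fin m × Fin n × Fin n) K ⧸ I) :=
    {a | ∃ f : MvPolynomial (Fin m) K, ∃ k ∈ Finset.Icc 1 n,
      a = (-1) ^ k * (matEval ξ' hcomm f).charpoly.coeff (n - k)} with hG
  set G' : Set (MvPolynomial (Fin n × Fin m) K) :=
    {d | ∃ f : MvPolynomial (Fin m) K, ∃ k ∈ Finset.Icc 1 n, d = EsymP K k f} with hG'
  have hGim : Δ' '' G = G' := by
    ext x
    constructor
    · rintro ⟨y, ⟨f, k, hk, rfl⟩, rfl⟩
      exact ⟨f, k, hk, hΔgen f k hk⟩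
    · rintro ⟨f, k, hk, rfl⟩
      exact ⟨_, ⟨f, k, hk, rfl⟩, hΔgen f k hk⟩
  have hset : Δ' '' (CP : Set _) = ((CP.map Δ' : Subalgebra K _) : Set _) := by
    ext x
    constructor
    · rintro ⟨y, hy, rfl⟩
      exact Subalgebra.mem_map.2 ⟨y, hy, rfl⟩
    · intro hx
      rcases Subalgebra.mem_map.1 hx with ⟨y, hy, rfl⟩
      exact ⟨y, hy, rfl⟩
  have hmain : (↑(Algebra.adjoin K G') : Set (MvPolynomial (Fin n × Fin m) K))
      = {d | ∀ σ : Equiv.Perm (Fin n),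
          MvPolynomial.rename (fun p : Fin n × Fin m => (σ p.1, p.2)) d = d} := by
    apply Set.Subset.antisymm
    · intro d hd
      have hle : Algebra.adjoin K G' ≤ invSub K n m := Algebra.adjoin_le (by
        rintro x ⟨f, k, hk, rfl⟩
        exact inv_EsymP k f)
      exact hle hd
    · intro d hd
      exact inv_mem _ (fun a μ ha han => by
        rw [← EsymP_monomial]
        exact Algebra.subset_adjoin ⟨monomial μ 1, a, Finset.mem_Icc.2 ⟨ha, han⟩, rfl⟩) d hd
  rw [hset, hCP, AlgHom.map_adjoin, hGim, hmain]
end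

section
/- Let K be a commutative ring. The restriction of Δ' : A_P → D to the invariant ring A_P^{GL(n,K)} is a surjection onto the ring of multisymmetric functions D^{S_n}. Likewise the restriction of Δ : A → D to A^{GL(n,K)} surjects onto D^{S_n}. -/
open MvPolynomial Finset

namespace Stmt9Aux

variable {K : Type*} [CommRing K] {n m : ℕ}

/-- the `i`-th row of an exponent vector -/
noncomputable def row (f : Fin n × Fin m →₀ ℕ) (i : Fin n) : Fin m →₀ ℕ :=
  Finsupp.equivFunOnFinite.symm fun k => f (i, k)

@[simp] lemma row_apply (f : Fin n × Fin m →₀ ℕ) (i : Fin n) (k : Fin m) :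
    row f i k = f (i, k) := rfl

lemma ext_row {f g : Fin n × Fin m →₀ ℕ} (h : ∀ i, row f i = row g i) : f = g := by
  ext ⟨i, k⟩
  have := congrArg (fun u => u k) (h i)
  simpa using this

lemma row_add (f g : Fin n × Fin m →₀ ℕ) (i : Fin n) :
    row (f + g) i = row f i + row g i := by
  ext k; simp

lemma row_tsub (f g : Fin n × Fin m →₀ ℕ) (i : Fin n) :
    row (f - g) i = row f i - row g i := by
  ext k; simp

/-- the set of nonzero rows -/
noncomputable def rset (f : Fin n × Fin m →₀ ℕ) : Finset (Fin n) :=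
  Finset.univ.filter fun i => row f i ≠ 0

@[simp] lemma mem_rset {f : Fin n × Fin m →₀ ℕ} {i : Fin n} :
    i ∈ rset f ↔ row f i ≠ 0 := by simp [rset]

/-- the number of nonzero rows -/
noncomputable def rdeg (f : Fin n × Fin m →₀ ℕ) : ℕ := (rset f).card

/-- fibers of the row map -/
noncomputable def fib (f : Fin n × Fin m →₀ ℕ) (μ : Fin m →₀ ℕ) : Finset (Fin n) :=
  Finset.univ.filter fun i => row f i = μ

@[simp] lemma mem_fib {f : Fin n × Fin m →₀ ℕ} {μ : Fin m →₀ ℕ} {i : Fin n} :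
    i ∈ fib f μ ↔ row f i = μ := by simp [fib]

/-- the multiset of nonzero rows, as a `Finsupp` of multiplicities -/
noncomputable def rows (f : Fin n × Fin m →₀ ℕ) : (Fin m →₀ ℕ) →₀ ℕ :=
  ∑ i ∈ rset f, Finsupp.single (row f i) 1

lemma rows_apply (f : Fin n × Fin m →₀ ℕ) {μ : Fin m →₀ ℕ} (hμ : μ ≠ 0) :
    rows f μ = (fib f μ).card := by
  classical
  rw [rows, Finsupp.finset_sum_apply]
  have : ∀ i ∈ rset f, (Finsupp.single (row f i) 1 : (Fin m →₀ ℕ) →₀ ℕ) μ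
      = if row f i = μ then 1 else 0 := by
    intro i _; rw [Finsupp.single_apply]
  have h2 : fib f μ = (rset f).filter fun i => row f i = μ := by
    ext i; simp only [mem_fib, Finset.mem_filter, mem_rset]
    exact ⟨fun h => ⟨h ▸ hμ, h⟩, fun h => h.2⟩
  rw [Finset.sum_congr rfl this, h2, Finset.card_filter]

@[simp] lemma rows_apply_zero (f : Fin n × Fin m →₀ ℕ) : rows f 0 = 0 := by
  classical
  rw [rows, Finsupp.finset_sum_apply]
  apply Finset.sum_eq_zero
  intro i hi
  rw [Finsupp.single_apply, if_neg]
  exact fun h => (mem_rset.1 hi) h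

lemma rows_sum (f : Fin n × Fin m →₀ ℕ) : (rows f).sum (fun _ a => a) = rdeg f := by
  classical
  rw [rows, ← Finsupp.sum_finset_sum_index (by simp) (by intros; rfl)]
  unfold rdeg
  rw [Finset.card_eq_sum_ones]
  exact Finset.sum_congr rfl fun i _ => Finsupp.sum_single_index rfl

/-- embed a row exponent at row `i` -/
noncomputable def emb (i : Fin n) (μ : Fin m →₀ ℕ) : Fin n × Fin m →₀ ℕ :=
  Finsupp.equivFunOnFinite.symm fun p => if p.1 = i then μ p.2 else 0

@[simp] lemma emb_apply (i : Fin n) (μ : Fin m →₀ ℕ) (p : Fin n × Fin m) :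
    emb i μ p = if p.1 = i then μ p.2 else 0 := rfl

lemma row_emb (i j : Fin n) (μ : Fin m →₀ ℕ) :
    row (emb i μ) j = if j = i then μ else 0 := by
  by_cases h : j = i
  · subst h; ext k; simp
  · ext k; simp [h]

lemma emb_eq_sum (i : Fin n) (μ : Fin m →₀ ℕ) :
    emb i μ = ∑ k : Fin m, Finsupp.single (i, k) (μ k) := by
  ext ⟨j, l⟩
  rw [Finsupp.finset_sum_apply]
  rw [Finset.sum_congr rfl (fun k _ => Finsupp.single_apply)]
  by_cases h : j = i
  · subst h
    rw [Finset.sum_eq_single l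
      (fun k _ hk => by simp only [Prod.mk.injEq]; rw [if_neg (fun hh => hk hh.2)])
      (by simp)]
    simp
  · rw [Finset.sum_eq_zero
      (fun k _ => by simp only [Prod.mk.injEq]; rw [if_neg (fun hh => h hh.1.symm)])]
    simp [h]

/-- the monomial `∏ₖ x_{i,k}^{μ k}` -/
noncomputable def mon (μ : Fin m →₀ ℕ) (i : Fin n) : MvPolynomial (Fin n × Fin m) K :=
  ∏ k : Fin m, X (i, k) ^ μ k

lemma prod_X_pow_eq_monomial {σ : Type*} {s : Finset σ} {u : σ → Fin n × Fin m}
    {e : σ → ℕ} :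
    (∏ k ∈ s, (X (u k) : MvPolynomial (Fin n × Fin m) K) ^ e k)
      = monomial (∑ k ∈ s, Finsupp.single (u k) (e k)) 1 := by
  classical
  induction s using Finset.induction with
  | empty => simp
  | insert _ _ hx ih =>
      rw [Finset.prod_insert hx, Finset.sum_insert hx, ih, X_pow_eq_monomial,
        monomial_mul, one_mul]

lemma mon_eq_monomial (μ : Fin m →₀ ℕ) (i : Fin n) :
    (mon μ i : MvPolynomial (Fin n × Fin m) K) = monomial (emb i μ) 1 := by
  rw [mon, prod_X_pow_eq_monomial, emb_eq_sum]

/-- exponent of a product of `mon`s over a subset `T` of rows -/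
noncomputable def gsum (T : Finset (Fin n)) (μ : Fin m →₀ ℕ) : Fin n × Fin m →₀ ℕ :=
  ∑ i ∈ T, emb i μ

lemma gsum_insert {T : Finset (Fin n)} {a : Fin n} (ha : a ∉ T) (μ : Fin m →₀ ℕ) :
    gsum (insert a T) μ = emb a μ + gsum T μ := Finset.sum_insert ha

lemma row_gsum (T : Finset (Fin n)) (μ : Fin m →₀ ℕ) (j : Fin n) :
    row (gsum T μ) j = if j ∈ T then μ else 0 := by
  classical
  ext k
  rw [gsum, row_apply, Finsupp.finset_sum_apply]
  rw [Finset.sum_congr rfl (fun i _ => by rw [emb_apply])]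
  by_cases h : j ∈ T
  · rw [Finset.sum_eq_single j (fun i _ hij => by simp [Ne.symm hij]) (fun hj => (hj h).elim)]
    simp [h]
  · rw [Finset.sum_eq_zero (fun i hi => by
      have : ¬ (j = i) := fun hh => h (hh ▸ hi)
      simp [this])]
    simp [h]

lemma rset_gsum (T : Finset (Fin n)) {μ : Fin m →₀ ℕ} (hμ : μ ≠ 0) :
    rset (gsum T μ) = T := by
  ext j; rw [mem_rset, row_gsum]
  by_cases h : j ∈ T <;> simp [h, hμ]

lemma prod_mon_eq (T : Finset (Fin n)) (μ : Fin m →₀ ℕ) :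
    (∏ i ∈ T, (mon μ i : MvPolynomial (Fin n × Fin m) K)) = monomial (gsum T μ) 1 := by
  classical
  induction T using Finset.induction with
  | empty => simp [gsum]
  | insert _ _ hx ih =>
      rw [Finset.prod_insert hx, ih, mon_eq_monomial, monomial_mul, one_mul,
        gsum_insert hx]

/-- elementary multisymmetric polynomial on the monomial `μ` -/
noncomputable def esym (a : ℕ) (μ : Fin m →₀ ℕ) : MvPolynomial (Fin n × Fin m) K :=
  ∑ T ∈ Finset.powersetCard a Finset.univ, ∏ i ∈ T, mon μ i

lemma esym_eq_sum_monomial (a : ℕ) (μ : Fin m →₀ ℕ) :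
    (esym a μ : MvPolynomial (Fin n × Fin m) K)
      = ∑ T ∈ Finset.powersetCard a Finset.univ, monomial (gsum T μ) 1 :=
  Finset.sum_congr rfl fun T _ => prod_mon_eq T μ

@[simp] lemma esym_zero (μ : Fin m →₀ ℕ) : (esym 0 μ : MvPolynomial (Fin n × Fin m) K) = 1 := by
  rw [esym, Finset.powersetCard_zero]
  simp

lemma coeff_esym_ne_zero {a : ℕ} {μ : Fin m →₀ ℕ} {f : Fin n × Fin m →₀ ℕ}
    (h : coeff f (esym a μ : MvPolynomial (Fin n × Fin m) K) ≠ 0) :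
    ∃ T : Finset (Fin n), T.card = a ∧ f = gsum T μ := by
  classical
  rw [esym_eq_sum_monomial, coeff_sum] at h
  obtain ⟨T, hT, hne⟩ := Finset.exists_ne_zero_of_sum_ne_zero h
  refine ⟨T, (Finset.mem_powersetCard.1 hT).2, ?_⟩
  by_contra hf
  rw [coeff_monomial, if_neg (fun hh => hf hh.symm)] at hne
  exact hne rfl

lemma coeff_esym_gsum {a : ℕ} {μ : Fin m →₀ ℕ} (hμ : μ ≠ 0) {T : Finset (Fin n)}
    (hT : T.card = a) :
    coeff (gsum T μ) (esym a μ : MvPolynomial (Fin n × Fin m) K) = 1 := by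
  classical
  rw [esym_eq_sum_monomial, coeff_sum]
  rw [Finset.sum_eq_single T
    (fun T' hT' hne => by
      rw [coeff_monomial, if_neg]
      intro hh
      exact hne (by rw [← rset_gsum T' hμ, hh, rset_gsum T hμ]))
    (fun hT' => (hT' (Finset.mem_powersetCard.2 ⟨Finset.subset_univ T, hT⟩)).elim)]
  rw [coeff_monomial, if_pos rfl]

@[simp] lemma row_zero (i : Fin n) : row (0 : Fin n × Fin m →₀ ℕ) i = 0 := by ext k; simp

@[simp] lemma rdeg_zero : rdeg (0 : Fin n × Fin m →₀ ℕ) = 0 := by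
  rw [rdeg, Finset.card_eq_zero]
  ext i; simp

@[simp] lemma rows_zero : rows (0 : Fin n × Fin m →₀ ℕ) = 0 := by
  rw [rows]
  apply Finset.sum_eq_zero
  intro i hi
  simp at hi

lemma eq_zero_of_rdeg_eq_zero {f : Fin n × Fin m →₀ ℕ} (h : rdeg f = 0) : f = 0 := by
  rw [rdeg, Finset.card_eq_zero] at h
  apply ext_row
  intro i
  by_contra hi
  have : i ∈ rset f := mem_rset.2 (by simpa using hi)
  rw [h] at this
  simp at this

lemma rset_add_subset (f g : Fin n × Fin m →₀ ℕ) : rset (f + g) ⊆ rset f ∪ rset g := by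
  intro i hi
  rw [mem_rset, row_add] at hi
  rw [Finset.mem_union, mem_rset, mem_rset]
  by_contra h
  push_neg at h
  rw [h.1, h.2] at hi
  simp at hi

lemma rset_gsum_subset (T : Finset (Fin n)) (μ : Fin m →₀ ℕ) : rset (gsum T μ) ⊆ T := by
  intro i hi
  rw [mem_rset, row_gsum] at hi
  by_contra h
  rw [if_neg h] at hi
  exact hi rfl

/-- total multiplicity of a multiset of rows -/
noncomputable def wt (w : (Fin m →₀ ℕ) →₀ ℕ) : ℕ := w.sum fun _ a => a

/-- the product of elementary multisymmetric polynomials prescribed by `w` -/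
noncomputable def Ew (w : (Fin m →₀ ℕ) →₀ ℕ) : MvPolynomial (Fin n × Fin m) K :=
  w.prod fun μ a => esym a μ

lemma wt_single_add {μ : Fin m →₀ ℕ} {a : ℕ} {w' : (Fin m →₀ ℕ) →₀ ℕ} :
    wt (Finsupp.single μ a + w') = a + wt w' := by
  rw [wt, Finsupp.sum_add_index' (fun _ => rfl) (fun _ _ _ => rfl), Finsupp.sum_single_index rfl]
  rfl

lemma Ew_single_add {μ : Fin m →₀ ℕ} {a : ℕ} {w' : (Fin m →₀ ℕ) →₀ ℕ}
    (hsupp : μ ∉ w'.support) (hb : a ≠ 0) :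
    (Ew (Finsupp.single μ a + w') : MvPolynomial (Fin n × Fin m) K) = esym a μ * Ew w' := by
  rw [Ew, Finsupp.prod_add_index_of_disjoint, Finsupp.prod_single_index (esym_zero μ)]
  · rfl
  · rw [Finsupp.support_single_ne_zero _ hb]
    simpa using hsupp

@[simp] lemma Ew_zero : (Ew 0 : MvPolynomial (Fin n × Fin m) K) = 1 := rfl

lemma rows_eq_imp_rdeg (f : Fin n × Fin m →₀ ℕ) (w : (Fin m →₀ ℕ) →₀ ℕ)
    (h : rows f = w) : rdeg f = wt w := by
  rw [← rows_sum, h]; rfl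

/-- The key coefficient computation for products of elementary multisymmetric
polynomials. -/
lemma Ew_coeff (w : (Fin m →₀ ℕ) →₀ ℕ) :
    (∀ f, coeff f (Ew w : MvPolynomial (Fin n × Fin m) K) ≠ 0 → rdeg f ≤ wt w) ∧
    (w 0 = 0 → ∀ f : Fin n × Fin m →₀ ℕ, rdeg f = wt w →
      coeff f (Ew w : MvPolynomial (Fin n × Fin m) K) = if rows f = w then 1 else 0) := by
  classical
  induction w using Finsupp.induction with
  | zero =>
      constructor
      · intro f hf
        rw [Ew_zero, coeff_one] at hf
        have : f = 0 := by by_contra h; rw [if_neg (fun hh => h hh.symm)] at hf; exact hf rfl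
        subst this
        simp [wt]
      · intro _ f hdeg
        have hf0 : f = 0 := eq_zero_of_rdeg_eq_zero (by simpa [wt] using hdeg)
        subst hf0
        rw [Ew_zero, coeff_one, if_pos rfl, if_pos (by simp)]
  | single_add μ a w' hsupp hb IH =>
      have hw'μ : w' μ = 0 := Finsupp.notMem_support_iff.1 hsupp
      have hE : (Ew (Finsupp.single μ a + w') : MvPolynomial (Fin n × Fin m) K)
          = esym a μ * Ew w' := Ew_single_add hsupp hb
      constructor
      · -- degree bound
        intro f hf
        rw [hE, coeff_mul] at hf
        obtain ⟨x, hx, hne⟩ := Finset.exists_ne_zero_of_sum_ne_zero hf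
        have hx1 : coeff x.1 (esym a μ : MvPolynomial (Fin n × Fin m) K) ≠ 0 :=
          fun h => hne (by rw [h, zero_mul])
        have hx2 : coeff x.2 (Ew w' : MvPolynomial (Fin n × Fin m) K) ≠ 0 :=
          fun h => hne (by rw [h, mul_zero])
        obtain ⟨T, hTcard, hTx⟩ := coeff_esym_ne_zero hx1
        have h2 : rdeg x.2 ≤ wt w' := IH.1 x.2 hx2
        have hadd : x.1 + x.2 = f := Finset.HasAntidiagonal.mem_antidiagonal.1 hx
        have h1 : rdeg x.1 ≤ a := by
          rw [rdeg, ← hTcard, hTx]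
          exact Finset.card_le_card (rset_gsum_subset T μ)
        calc rdeg f = (rset (x.1 + x.2)).card := by rw [hadd]; rfl
          _ ≤ (rset x.1 ∪ rset x.2).card := Finset.card_le_card (rset_add_subset _ _)
          _ ≤ rdeg x.1 + rdeg x.2 := Finset.card_union_le _ _
          _ ≤ a + wt w' := Nat.add_le_add h1 h2
          _ = wt (Finsupp.single μ a + w') := wt_single_add.symm
      · -- exact coefficient in top degree
        intro hw0 f hdeg
        have hμ0 : μ ≠ 0 := by
          intro h
          subst h
          rw [Finsupp.add_apply, Finsupp.single_eq_same] at hw0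
          omega
        have hw'0 : w' 0 = 0 := by
          rw [Finsupp.add_apply, Finsupp.single_apply, if_neg hμ0] at hw0
          omega
        rw [hE, coeff_mul]
        rw [wt_single_add] at hdeg
        -- analysis of an arbitrary nonzero term
        have main : ∀ x : (Fin n × Fin m →₀ ℕ) × (Fin n × Fin m →₀ ℕ),
            x ∈ Finset.HasAntidiagonal.antidiagonal f →
            coeff x.1 (esym a μ : MvPolynomial (Fin n × Fin m) K)
              * coeff x.2 (Ew w' : MvPolynomial (Fin n × Fin m) K) ≠ 0 →
            rows f = Finsupp.single μ a + w' ∧ x.1 = gsum (fib f μ) μ ∧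
            coeff x.1 (esym a μ : MvPolynomial (Fin n × Fin m) K)
              * coeff x.2 (Ew w' : MvPolynomial (Fin n × Fin m) K) = 1 := by
          intro x hx hne
          have hx1 : coeff x.1 (esym a μ : MvPolynomial (Fin n × Fin m) K) ≠ 0 :=
            fun h => hne (by rw [h, zero_mul])
          have hx2 : coeff x.2 (Ew w' : MvPolynomial (Fin n × Fin m) K) ≠ 0 :=
            fun h => hne (by rw [h, mul_zero])
          obtain ⟨T, hTcard, hTx⟩ := coeff_esym_ne_zero hx1
          have hrsetx1 : rset x.1 = T := by rw [hTx]; exact rset_gsum T hμ0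
          have h2 : rdeg x.2 ≤ wt w' := IH.1 x.2 hx2
          have hadd : x.1 + x.2 = f := Finset.HasAntidiagonal.mem_antidiagonal.1 hx
          have hsub : rset f ⊆ T ∪ rset x.2 := by
            rw [← hadd, ← hrsetx1]; exact rset_add_subset _ _
          have hchain1 : (T ∪ rset x.2).card ≤ a + rdeg x.2 := by
            calc (T ∪ rset x.2).card ≤ T.card + (rset x.2).card := Finset.card_union_le _ _
              _ = a + rdeg x.2 := by rw [hTcard]; rfl
          have hbig : a + wt w' ≤ (T ∪ rset x.2).card := by
            rw [← hdeg]; exact Finset.card_le_card hsub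
          have hdegx2 : rdeg x.2 = wt w' := le_antisymm h2 (by omega)
          have hcardU : (T ∪ rset x.2).card = a + rdeg x.2 := by omega
          have hdisj : Disjoint T (rset x.2) := by
            rw [Finset.disjoint_iff_inter_eq_empty, ← Finset.card_eq_zero]
            have h3 := Finset.card_union_add_card_inter T (rset x.2)
            have hrd : rdeg x.2 = #(rset x.2) := rfl
            rw [hcardU, hTcard, hrd] at h3
            omega
          have hrsetf : rset f = T ∪ rset x.2 :=
            Finset.eq_of_subset_of_card_le hsub
              (by rw [hcardU, hdegx2, ← hdeg]; exact le_of_eq rfl)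
          have hcoefx2 := IH.2 hw'0 x.2 hdegx2
          have hrowsx2 : rows x.2 = w' := by
            by_contra h
            rw [hcoefx2, if_neg h] at hx2
            exact hx2 rfl
          -- row computations
          have hrow_in : ∀ i ∈ T, row f i = μ ∧ row x.2 i = 0 := by
            intro i hi
            have h0 : row x.2 i = 0 := by
              by_contra h
              exact (Finset.disjoint_left.1 hdisj hi) (mem_rset.2 h)
            have : row x.1 i = μ := by rw [hTx, row_gsum, if_pos hi]
            exact ⟨by rw [← hadd, row_add, this, h0, add_zero], h0⟩
          have hrow_out : ∀ i, i ∉ T → row f i = row x.2 i := by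
            intro i hi
            have : row x.1 i = 0 := by rw [hTx, row_gsum, if_neg hi]
            rw [← hadd, row_add, this, zero_add]
          have hfib : fib f μ = T := by
            ext i
            rw [mem_fib]
            constructor
            · intro h
              by_contra hiT
              have : row x.2 i = μ := by rw [← hrow_out i hiT]; exact h
              have hiR : i ∈ fib x.2 μ := mem_fib.2 this
              have : rows x.2 μ = 0 := by rw [hrowsx2]; exact hw'μ
              rw [rows_apply x.2 hμ0, Finset.card_eq_zero] at this
              rw [this] at hiR
              simp at hiR
            · intro h; exact (hrow_in i h).1
          have hfibν : ∀ ν : Fin m →₀ ℕ, ν ≠ 0 → ν ≠ μ → fib f ν = fib x.2 ν := by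
            intro ν hν0 hνμ
            ext i
            rw [mem_fib, mem_fib]
            by_cases hi : i ∈ T
            · constructor
              · intro h; exact absurd ((hrow_in i hi).1 ▸ h : μ = ν).symm hνμ
              · intro h; rw [(hrow_in i hi).2] at h; exact absurd h.symm hν0
            · rw [hrow_out i hi]
          have hrowsf : rows f = Finsupp.single μ a + w' := by
            ext ν
            by_cases hν0 : ν = 0
            · subst hν0
              rw [rows_apply_zero, Finsupp.add_apply, Finsupp.single_apply, if_neg hμ0, hw'0]
            · by_cases hνμ : ν = μ
              · subst hνμ
                rw [rows_apply f hν0, hfib, hTcard, Finsupp.add_apply, Finsupp.single_eq_same,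
                  hw'μ, add_zero]
              · rw [rows_apply f hν0, hfibν ν hν0 hνμ, ← rows_apply x.2 hν0, hrowsx2,
                  Finsupp.add_apply, Finsupp.single_apply, if_neg (fun h => hνμ h.symm), zero_add]
          refine ⟨hrowsf, by rw [hTx, hfib], ?_⟩
          rw [hTx, coeff_esym_gsum hμ0 hTcard, hcoefx2, if_pos hrowsx2, one_mul]
        by_cases hr : rows f = Finsupp.single μ a + w'
        · rw [if_pos hr]
          set T₀ := fib f μ with hT₀
          set g₀ := gsum T₀ μ with hg₀
          have hT₀card : T₀.card = a := by
            have : rows f μ = a := by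
              rw [hr, Finsupp.add_apply, Finsupp.single_eq_same, hw'μ, add_zero]
            rw [← this, rows_apply f hμ0]
          have hrowT₀ : ∀ i ∈ T₀, row f i = μ := fun i hi => mem_fib.1 hi
          have hle : g₀ ≤ f := by
            rw [Finsupp.le_def]
            intro p
            have : g₀ p = row g₀ p.1 p.2 := rfl
            rw [this, row_gsum]
            by_cases hp : p.1 ∈ T₀
            · rw [if_pos hp, ← hrowT₀ p.1 hp]; rfl
            · rw [if_neg hp]; exact Nat.zero_le _
          have hmem : (g₀, f - g₀) ∈ Finset.HasAntidiagonal.antidiagonal f := by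
            rw [Finset.HasAntidiagonal.mem_antidiagonal]
            exact add_tsub_cancel_of_le hle
          rw [Finset.sum_eq_single (g₀, f - g₀)
            (fun x hx hxne => by
              by_contra h
              obtain ⟨_, h1, _⟩ := main x hx h
              apply hxne
              have hadd : x.1 + x.2 = f := Finset.HasAntidiagonal.mem_antidiagonal.1 hx
              have : x.2 = f - g₀ := by
                rw [← h1]
                exact eq_tsub_of_add_eq (by rw [add_comm]; exact hadd)
              exact Prod.ext h1 this)
            (fun h => absurd hmem h)]
          -- the distinguished term equals 1
          have hrow_h₀ : ∀ i, row (f - g₀) i = if i ∈ T₀ then 0 else row f i := by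
            intro i
            rw [row_tsub]
            have : row g₀ i = if i ∈ T₀ then μ else 0 := row_gsum T₀ μ i
            rw [this]
            by_cases hi : i ∈ T₀
            · rw [if_pos hi, if_pos hi, hrowT₀ i hi]; simp
            · rw [if_neg hi, if_neg hi]; simp
          have hrows_h₀ : rows (f - g₀) = w' := by
            ext ν
            by_cases hν0 : ν = 0
            · subst hν0; rw [rows_apply_zero, hw'0]
            · rw [rows_apply _ hν0]
              by_cases hνμ : ν = μ
              · subst hνμ
                have : fib (f - g₀) ν = ∅ := by
                  ext i
                  rw [mem_fib, hrow_h₀]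
                  by_cases hi : i ∈ T₀
                  · rw [if_pos hi]
                    simp [Ne.symm hν0]
                  · rw [if_neg hi]
                    simp only [Finset.notMem_empty, iff_false]
                    intro h
                    exact hi (mem_fib.2 h)
                rw [this, Finset.card_empty, ← hw'μ]
              · have : fib (f - g₀) ν = fib f ν := by
                  ext i
                  rw [mem_fib, mem_fib, hrow_h₀]
                  by_cases hi : i ∈ T₀
                  · rw [if_pos hi]
                    constructor
                    · intro h; exact absurd h.symm hν0
                    · intro h; exact absurd (((hrowT₀ i hi).symm.trans h)).symm hνμ
                  · rw [if_neg hi]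
                rw [this, ← rows_apply f hν0, hr, Finsupp.add_apply, Finsupp.single_apply,
                  if_neg (fun h => hνμ h.symm), zero_add]
          have hdeg_h₀ : rdeg (f - g₀) = wt w' := rows_eq_imp_rdeg _ _ hrows_h₀
          rw [coeff_esym_gsum hμ0 hT₀card, IH.2 hw'0 _ hdeg_h₀, if_pos hrows_h₀, one_mul]
        · rw [if_neg hr]
          apply Finset.sum_eq_zero
          intro x hx
          by_contra h
          exact hr (main x hx h).1

lemma exists_perm_of_rows_eq {f f' : Fin n × Fin m →₀ ℕ} (h : rows f' = rows f) :
    ∃ σ : Equiv.Perm (Fin n), ∀ i, row f' i = row f (σ i) := by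
  classical
  have hrdeg : rdeg f' = rdeg f := by
    rw [← rows_sum, ← rows_sum, h]
  have hfib : ∀ ν, (fib f' ν).card = (fib f ν).card := by
    intro ν
    by_cases hν : ν = 0
    · subst hν
      have e1 : ∀ (g : Fin n × Fin m →₀ ℕ), fib g 0 = Finset.univ \ rset g := by
        intro g; ext i; simp [fib, rset]
      have e2 : ∀ (g : Fin n × Fin m →₀ ℕ), (fib g 0).card = n - rdeg g := by
        intro g
        rw [e1, Finset.card_sdiff_of_subset (Finset.subset_univ _)]
        simp [rdeg]
      rw [e2, e2, hrdeg]
    · rw [← rows_apply f' hν, ← rows_apply f hν, h]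
  have hcard : ∀ ν : Fin m →₀ ℕ,
      Fintype.card {i // row f' i = ν} = Fintype.card {i // row f i = ν} := by
    intro ν
    rw [Fintype.card_subtype, Fintype.card_subtype]
    exact hfib ν
  let e : ∀ ν : Fin m →₀ ℕ, {i // row f' i = ν} ≃ {i // row f i = ν} :=
    fun ν => Fintype.equivOfCardEq (hcard ν)
  refine ⟨((Equiv.sigmaFiberEquiv (row f')).symm.trans
    (Equiv.sigmaCongrRight e)).trans (Equiv.sigmaFiberEquiv (row f)), fun i => ?_⟩
  exact ((e (row f' i)) ⟨i, rfl⟩).2.symm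

lemma coeff_eq_of_rows_eq (d : MvPolynomial (Fin n × Fin m) K)
    (hinv : ∀ σ : Equiv.Perm (Fin n),
      rename (fun p : Fin n × Fin m => (σ p.1, p.2)) d = d)
    {f f' : Fin n × Fin m →₀ ℕ} (h : rows f' = rows f) :
    coeff f' d = coeff f d := by
  obtain ⟨σ, hσ⟩ := exists_perm_of_rows_eq h
  have hinj : Function.Injective (fun p : Fin n × Fin m => (σ.symm p.1, p.2)) := by
    intro p q hpq
    rw [Prod.ext_iff] at hpq ⊢
    simp only at hpq
    exact ⟨σ.symm.injective hpq.1, hpq.2⟩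
  have hmap : f' = Finsupp.mapDomain (fun p : Fin n × Fin m => (σ.symm p.1, p.2)) f := by
    ext ⟨j, k⟩
    have h1 : f' (j, k) = f (σ j, k) := by
      have := congrArg (fun u => u k) (hσ j)
      simpa using this
    have h2 : Finsupp.mapDomain (fun p : Fin n × Fin m => (σ.symm p.1, p.2)) f (j, k)
        = f (σ j, k) := by
      have he : (j, k) = (fun p : Fin n × Fin m => (σ.symm p.1, p.2)) (σ j, k) := by simp
      rw [he, Finsupp.mapDomain_apply hinj]
    exact h1.trans h2.symm
  rw [hmap]
  conv_lhs => rw [← hinv σ.symm]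
  exact coeff_rename_mapDomain _ hinj d f

lemma rename_mon (σ : Equiv.Perm (Fin n)) (μ : Fin m →₀ ℕ) (i : Fin n) :
    rename (fun p : Fin n × Fin m => (σ p.1, p.2)) (mon μ i : MvPolynomial (Fin n × Fin m) K)
      = mon μ (σ i) := by
  rw [mon, mon, map_prod]
  exact Finset.prod_congr rfl fun k _ => by rw [map_pow, rename_X]

lemma rename_esym (σ : Equiv.Perm (Fin n)) (a : ℕ) (μ : Fin m →₀ ℕ) :
    rename (fun p : Fin n × Fin m => (σ p.1, p.2)) (esym a μ : MvPolynomial (Fin n × Fin m) K)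
      = esym a μ := by
  classical
  rw [esym, map_sum]
  have step : ∀ T ∈ Finset.powersetCard a (Finset.univ : Finset (Fin n)),
      rename (fun p : Fin n × Fin m => (σ p.1, p.2)) (∏ i ∈ T, (mon μ i : MvPolynomial (Fin n × Fin m) K))
        = ∏ i ∈ T.image σ, (mon μ i : MvPolynomial (Fin n × Fin m) K) := by
    intro T _
    rw [map_prod, Finset.prod_image (fun x _ y _ hxy => σ.injective hxy)]
    exact Finset.prod_congr rfl fun i _ => rename_mon σ μ i
  rw [Finset.sum_congr rfl step]
  apply Finset.sum_nbij' (fun T => T.image σ) (fun T => T.image σ.symm)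
  · intro T hT
    rw [Finset.mem_powersetCard] at hT ⊢
    exact ⟨Finset.subset_univ _, by rw [Finset.card_image_of_injective _ σ.injective, hT.2]⟩
  · intro T hT
    rw [Finset.mem_powersetCard] at hT ⊢
    exact ⟨Finset.subset_univ _, by rw [Finset.card_image_of_injective _ σ.symm.injective, hT.2]⟩
  · intro T _
    ext i
    simp [Finset.mem_image]
  · intro T _
    ext i
    simp [Finset.mem_image]
  · intro T _
    rfl

/-- the generating set : all elementary multisymmetric polynomials attached to monomials -/
def genSet : Set (MvPolynomial (Fin n × Fin m) K) :=
  Set.range fun p : ℕ × (Fin m →₀ ℕ) => esym p.1 p.2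

lemma esym_mem_adjoin (a : ℕ) (μ : Fin m →₀ ℕ) :
    (esym a μ : MvPolynomial (Fin n × Fin m) K) ∈ Algebra.adjoin K (genSet (K := K) (n := n) (m := m)) :=
  Algebra.subset_adjoin ⟨(a, μ), rfl⟩

lemma Ew_mem_adjoin (w : (Fin m →₀ ℕ) →₀ ℕ) :
    (Ew w : MvPolynomial (Fin n × Fin m) K) ∈ Algebra.adjoin K (genSet (K := K) (n := n) (m := m)) := by
  rw [Ew, Finsupp.prod]
  exact Subalgebra.prod_mem _ fun μ _ => esym_mem_adjoin (w μ) μ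

lemma rename_Ew (σ : Equiv.Perm (Fin n)) (w : (Fin m →₀ ℕ) →₀ ℕ) :
    rename (fun p : Fin n × Fin m => (σ p.1, p.2)) (Ew w : MvPolynomial (Fin n × Fin m) K)
      = Ew w := by
  rw [Ew, Finsupp.prod, map_prod]
  exact Finset.prod_congr rfl fun μ _ => rename_esym σ (w μ) μ

lemma rdeg_le_n (f : Fin n × Fin m →₀ ℕ) : rdeg f ≤ n := by
  rw [rdeg]
  calc (rset f).card ≤ (Finset.univ : Finset (Fin n)).card := Finset.card_le_card (Finset.subset_univ _)
    _ = n := by simp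

/-- Main generation theorem: every multisymmetric polynomial is a polynomial in the
elementary multisymmetric polynomials attached to monomials. -/
theorem invariant_mem_adjoin (d : MvPolynomial (Fin n × Fin m) K)
    (hinv : ∀ σ : Equiv.Perm (Fin n),
      rename (fun p : Fin n × Fin m => (σ p.1, p.2)) d = d) :
    d ∈ Algebra.adjoin K (genSet (K := K) (n := n) (m := m)) := by
  classical
  suffices H : ∀ (R N : ℕ) (d : MvPolynomial (Fin n × Fin m) K),
      (∀ σ : Equiv.Perm (Fin n), rename (fun p : Fin n × Fin m => (σ p.1, p.2)) d = d) →
      (∀ f ∈ d.support, rdeg f ≤ R) →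
      ((d.support.filter fun f => rdeg f = R).card ≤ N) →
      d ∈ Algebra.adjoin K (genSet (K := K) (n := n) (m := m)) by
    exact H n d.support.card d hinv (fun f _ => rdeg_le_n f)
      (Finset.card_le_card (Finset.filter_subset _ _))
  intro R
  induction R with
  | zero =>
      intro N d hinvd hbound _
      have hd : d = C (coeff 0 d) := by
        apply MvPolynomial.ext
        intro g
        rw [coeff_C]
        by_cases hg : g = 0
        · rw [if_pos hg.symm, hg]
        · rw [if_neg (fun hh => hg hh.symm)]
          by_contra hne
          have hg0 : g = 0 := eq_zero_of_rdeg_eq_zero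
            (Nat.le_zero.1 (hbound g (MvPolynomial.mem_support_iff.2 hne)))
          exact hg hg0
      rw [hd]
      exact Subalgebra.algebraMap_mem _ _
  | succ R ihR =>
      intro N
      induction N with
      | zero =>
          intro d hinvd hbound hcount
          apply ihR d.support.card d hinvd
          · intro f hf
            have h1 : rdeg f ≤ R + 1 := hbound f hf
            have h2 : rdeg f ≠ R + 1 := by
              intro hh
              have : f ∈ d.support.filter fun f => rdeg f = R + 1 :=
                Finset.mem_filter.2 ⟨hf, hh⟩
              rw [Finset.card_eq_zero.1 (Nat.le_zero.1 hcount)] at this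
              simp at this
            omega
          · exact Finset.card_le_card (Finset.filter_subset _ _)
      | succ N ihN =>
          intro d hinvd hbound hcount
          by_cases hc : (d.support.filter fun f => rdeg f = R + 1).card ≤ N
          · exact ihN d hinvd hbound hc
          · have hne : (d.support.filter fun f => rdeg f = R + 1).Nonempty := by
              rw [← Finset.card_pos]
              omega
            obtain ⟨f, hf⟩ := hne
            obtain ⟨hfs, hfr⟩ := Finset.mem_filter.1 hf
            set w := rows f with hwdef
            have hw0 : w 0 = 0 := rows_apply_zero f
            have hwt : wt w = R + 1 := by
              rw [← rows_eq_imp_rdeg f w rfl, hfr]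
            set c := coeff f d with hcdef
            set d' := d - C c * Ew w with hd'def
            have hd : d = d' + C c * Ew w := by rw [hd'def]; ring
            have hcoeffd' : ∀ g, coeff g d' = coeff g d - c * coeff g (Ew w) := by
              intro g
              rw [hd'def, coeff_sub, coeff_C_mul]
            suffices hd' : d' ∈ Algebra.adjoin K (genSet (K := K) (n := n) (m := m)) by
              rw [hd]
              exact add_mem hd' (mul_mem (Subalgebra.algebraMap_mem _ _) (Ew_mem_adjoin w))
            -- invariance of d'
            have hinvd' : ∀ σ : Equiv.Perm (Fin n),
                rename (fun p : Fin n × Fin m => (σ p.1, p.2)) d' = d' := by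
              intro σ
              rw [hd'def, map_sub, map_mul, hinvd σ, rename_C, rename_Ew]
            -- degree bound for d'
            have hboundd' : ∀ g ∈ d'.support, rdeg g ≤ R + 1 := by
              intro g hg
              rw [MvPolynomial.mem_support_iff, hcoeffd' g] at hg
              by_cases h1 : coeff g d = 0
              · have h2 : coeff g (Ew w : MvPolynomial (Fin n × Fin m) K) ≠ 0 := by
                  intro hh; rw [h1, hh] at hg; simp at hg
                rw [← hwt]
                exact (Ew_coeff (K := K) w).1 g h2
              · exact hbound g (MvPolynomial.mem_support_iff.2 h1)
            -- count bound for d'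
            have hcountd' : (d'.support.filter fun g => rdeg g = R + 1) ⊆
                (d.support.filter fun g => rdeg g = R + 1).erase f := by
              intro g hg
              obtain ⟨hgs, hgr⟩ := Finset.mem_filter.1 hg
              rw [MvPolynomial.mem_support_iff, hcoeffd' g] at hgs
              have hgdeg : rdeg g = wt w := by rw [hgr, hwt]
              have hEwg := (Ew_coeff (K := K) w).2 hw0 g hgdeg
              by_cases hr : rows g = w
              · exfalso
                rw [hEwg, if_pos hr] at hgs
                rw [coeff_eq_of_rows_eq d hinvd (hr.trans hwdef)]
                  at hgs
                rw [← hcdef] at hgs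
                simp at hgs
              · rw [hEwg, if_neg hr, mul_zero, sub_zero] at hgs
                apply Finset.mem_erase.2
                refine ⟨?_, Finset.mem_filter.2 ⟨MvPolynomial.mem_support_iff.2 hgs, hgr⟩⟩
                intro hgf
                exact hr (by rw [hgf])
            apply ihN d' hinvd' hboundd'
            calc (d'.support.filter fun g => rdeg g = R + 1).card
                ≤ ((d.support.filter fun g => rdeg g = R + 1).erase f).card :=
                  Finset.card_le_card hcountd'
              _ = (d.support.filter fun g => rdeg g = R + 1).card - 1 :=
                  Finset.card_erase_of_mem hf
              _ ≤ N := by omega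

section Matrices

variable {R : Type*} [CommRing R] {N : ℕ}

lemma list_prod_diagonal (l : List (Fin N → R)) :
    (l.map Matrix.diagonal).prod = Matrix.diagonal fun i => (l.map fun v => v i).prod := by
  induction l with
  | nil => simp
  | cons v l ih =>
      rw [List.map_cons, List.prod_cons, ih, Matrix.diagonal_mul_diagonal]
      have h : (fun i => v i * (l.map fun w => w i).prod)
          = fun i => ((v :: l).map fun w => w i).prod := by
        funext i
        rw [List.map_cons, List.prod_cons]
      rw [h]

lemma charpoly_diagonal (v : Fin N → R) :
    (Matrix.diagonal v).charpoly = ∏ i, (Polynomial.X - Polynomial.C (v i)) := by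
  rw [Matrix.charpoly]
  have h : (Matrix.diagonal v).charmatrix
      = Matrix.diagonal fun i => (Polynomial.X : Polynomial R) - Polynomial.C (v i) := by
    ext i j
    by_cases h : i = j
    · subst h
      rw [Matrix.charmatrix_apply_eq, Matrix.diagonal_apply_eq, Matrix.diagonal_apply_eq]
    · rw [Matrix.charmatrix_apply_ne _ _ _ h, Matrix.diagonal_apply_ne _ h,
        Matrix.diagonal_apply_ne _ h, Polynomial.C_0, neg_zero]
  rw [h, Matrix.det_diagonal]

lemma charpoly_units_conj (u : (Matrix (Fin N) (Fin N) R)ˣ) (M : Matrix (Fin N) (Fin N) R) :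
    ((u⁻¹).val * M * u.val).charpoly = M.charpoly := by
  set φ : Matrix (Fin N) (Fin N) R →+* Matrix (Fin N) (Fin N) (Polynomial R) :=
    (Polynomial.C : R →+* Polynomial R).mapMatrix with hφ
  set U : Matrix (Fin N) (Fin N) R := u.val with hU
  set U' : Matrix (Fin N) (Fin N) R := (u⁻¹).val with hU'
  have hsc : ∀ B : Matrix (Fin N) (Fin N) (Polynomial R),
      Matrix.scalar (Fin N) (Polynomial.X : Polynomial R) * B
        = B * Matrix.scalar (Fin N) (Polynomial.X : Polynomial R) :=
    fun B => (Matrix.scalar_commute _ (fun r' => Commute.all _ _) B).eq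
  have hUU : U' * U = 1 := u.inv_mul
  have h1 : Matrix.charmatrix (U' * M * U) = φ U' * Matrix.charmatrix M * φ U := by
    have h2 : φ U' * Matrix.scalar (Fin N) (Polynomial.X : Polynomial R) * φ U
        = Matrix.scalar (Fin N) (Polynomial.X : Polynomial R) := by
      rw [mul_assoc, hsc, ← mul_assoc, ← map_mul, hUU, map_one, one_mul]
    rw [Matrix.charmatrix, Matrix.charmatrix, ← hφ, map_mul, map_mul, mul_sub, sub_mul, h2]
  rw [Matrix.charpoly, Matrix.charpoly, h1, Matrix.det_mul, Matrix.det_mul]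
  have h3 : (φ U').det * (φ U).det = 1 := by
    rw [← Matrix.det_mul, ← map_mul, hUU, map_one, Matrix.det_one]
  rw [mul_right_comm, h3, one_mul]

end Matrices

section Preimage

lemma exists_invariant_preimage
    (ξ : Fin m → Matrix (Fin n) (Fin n) (MvPolynomial (Fin m × Fin n × Fin n) K))
    (hξ : ξ = fun k => Matrix.of fun i j => MvPolynomial.X (k, i, j))
    (c : GL (Fin n) K →
      (MvPolynomial (Fin m × Fin n × Fin n) K →ₐ[K] MvPolynomial (Fin m × Fin n × Fin n) K))
    (hc : ∀ (g : GL (Fin n) K) (p : Fin m × Fin n × Fin n),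
      c g (MvPolynomial.X p) =
        ((((g⁻¹ : GL (Fin n) K) : Matrix (Fin n) (Fin n) K).map
            (algebraMap K (MvPolynomial (Fin m × Fin n × Fin n) K)) *
          ξ p.1 *
          ((g : Matrix (Fin n) (Fin n) K)).map
            (algebraMap K (MvPolynomial (Fin m × Fin n × Fin n) K)))
          p.2.1 p.2.2))
    (Δ : MvPolynomial (Fin m × Fin n × Fin n) K →ₐ[K] MvPolynomial (Fin n × Fin m) K)
    (hΔ : Δ = MvPolynomial.aeval fun p : Fin m × Fin n × Fin n =>
      if p.2.1 = p.2.2 then MvPolynomial.X (p.2.1, p.1) else 0)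
    (a : ℕ) (α : Fin m →₀ ℕ) :
    ∃ x, (∀ g : GL (Fin n) K, c g x = x) ∧ Δ x = esym a α := by
  classical
  by_cases han : a ≤ n
  case neg =>
    refine ⟨0, fun g => map_zero _, ?_⟩
    rw [map_zero, esym, Finset.powersetCard_eq_empty.2
      (by rw [Finset.card_univ, Fintype.card_fin]; omega), Finset.sum_empty]
  case pos =>
  set L : List (Matrix (Fin n) (Fin n) (MvPolynomial (Fin m × Fin n × Fin n) K)) :=
    (List.finRange m).map (fun k => ξ k ^ α k) with hL
  set W : Matrix (Fin n) (Fin n) (MvPolynomial (Fin m × Fin n × Fin n) K) := L.prod with hWdef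
  refine ⟨(-1 : MvPolynomial (Fin m × Fin n × Fin n) K) ^ a * W.charpoly.coeff (n - a), ?_, ?_⟩
  · -- invariance under the conjugation action
    intro g
    rw [map_mul, map_pow, map_neg, map_one]
    congr 1
    set φm : Matrix (Fin n) (Fin n) K →+* Matrix (Fin n) (Fin n)
        (MvPolynomial (Fin m × Fin n × Fin n) K) :=
      (algebraMap K (MvPolynomial (Fin m × Fin n × Fin n) K)).mapMatrix with hφm
    set u : (Matrix (Fin n) (Fin n) (MvPolynomial (Fin m × Fin n × Fin n) K))ˣ :=
      Units.map φm.toMonoidHom g with hu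
    have hucoe : u.val
        = ((g : Matrix (Fin n) (Fin n) K)).map
            (algebraMap K (MvPolynomial (Fin m × Fin n × Fin n) K)) := rfl
    have huinv : (u⁻¹).val
        = (((g⁻¹ : GL (Fin n) K) : Matrix (Fin n) (Fin n) K)).map
            (algebraMap K (MvPolynomial (Fin m × Fin n × Fin n) K)) := by
      rw [hu, ← map_inv (Units.map φm.toMonoidHom) g]
      rfl
    set ψ : Matrix (Fin n) (Fin n) (MvPolynomial (Fin m × Fin n × Fin n) K) →*
        Matrix (Fin n) (Fin n) (MvPolynomial (Fin m × Fin n × Fin n) K) :=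
      { toFun := fun M => (u⁻¹).val * M * u.val
        map_one' := by
          show (u⁻¹).val * 1 * u.val = 1
          rw [mul_one, u.inv_mul]
        map_mul' := fun M N => by
          show (u⁻¹).val * (M * N) * u.val
            = (u⁻¹).val * M * u.val * ((u⁻¹).val * N * u.val)
          simp only [mul_assoc]
          rw [← mul_assoc (u.val) ((u⁻¹).val) (N * u.val), u.mul_inv, one_mul] } with hψ
    have hbase : ∀ k, (c g).toRingHom.mapMatrix (ξ k) = ψ (ξ k) := by
      intro k
      apply Matrix.ext
      intro i j
      show ((ξ k).map ⇑(c g)) i j = ((u⁻¹).val * (ξ k) * u.val) i j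
      rw [hucoe, huinv, Matrix.map_apply]
      have h1 : ξ k i j = MvPolynomial.X (k, i, j) := by rw [hξ]; rfl
      rw [h1, hc g (k, i, j)]
    have hξψ : ∀ kk ∈ L, (c g).toRingHom.mapMatrix kk = ψ kk := by
      intro kk hkk
      rw [hL] at hkk
      obtain ⟨k, _, rfl⟩ := List.mem_map.1 hkk
      rw [map_pow, map_pow, hbase k]
    have hLmap : (c g).toRingHom.mapMatrix W = ψ W := by
      rw [hWdef, map_list_prod, map_list_prod]
      congr 1
      exact List.map_congr_left hξψ
    have h3 : (W.map ⇑((c g).toRingHom)).charpoly = W.charpoly := by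
      have h3' : W.map ⇑((c g).toRingHom) = (u⁻¹).val * W * u.val := hLmap
      rw [h3', charpoly_units_conj]
    have h4 := (Matrix.charpoly_map W (c g).toRingHom).symm.trans h3
    have h5 := congrArg (fun p => p.coeff (n - a)) h4
    simp only [Polynomial.coeff_map] at h5
    exact h5
  · -- image under Δ
    rw [map_mul, map_pow, map_neg, map_one]
    have hξΔ : ∀ k, Δ.toRingHom.mapMatrix (ξ k)
        = Matrix.diagonal (fun i => MvPolynomial.X (i, k)) := by
      intro k
      apply Matrix.ext
      intro i j
      show ((ξ k).map ⇑Δ) i j = _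
      rw [Matrix.map_apply]
      have h1 : ξ k i j = MvPolynomial.X (k, i, j) := by rw [hξ]; rfl
      rw [h1, hΔ, MvPolynomial.aeval_X]
      by_cases hij : i = j
      · subst hij
        rw [Matrix.diagonal_apply_eq]
        exact if_pos rfl
      · rw [Matrix.diagonal_apply_ne _ hij]
        exact if_neg hij
    have hWΔ : W.map ⇑Δ = Matrix.diagonal (fun i => (mon α i : MvPolynomial (Fin n × Fin m) K)) := by
      show Δ.toRingHom.mapMatrix W = _
      rw [hWdef, map_list_prod, hL, List.map_map]
      have hstep : ((List.finRange m).map (⇑Δ.toRingHom.mapMatrix ∘ fun k => ξ k ^ α k))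
          = (List.finRange m).map
              (Matrix.diagonal ∘ fun k => ((fun i => MvPolynomial.X (i, k)) ^ α k :
                Fin n → MvPolynomial (Fin n × Fin m) K)) := by
        apply List.map_congr_left
        intro k _
        show Δ.toRingHom.mapMatrix (ξ k ^ α k) = _
        rw [map_pow, hξΔ k, Matrix.diagonal_pow]
        rfl
      rw [hstep, ← List.map_map, list_prod_diagonal]
      have hfun : (fun i => (((List.finRange m).map
            (fun k => ((fun i' => MvPolynomial.X (i', k)) ^ α k :
              Fin n → MvPolynomial (Fin n × Fin m) K))).map (fun v => v i)).prod)
          = fun i => (mon α i : MvPolynomial (Fin n × Fin m) K) := by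
        funext i
        rw [List.map_map, mon, Fin.prod_univ_def]
        rfl
      rw [hfun]
    have hΔcoeff : Δ (W.charpoly.coeff (n - a))
        = ((Matrix.diagonal fun i => (mon α i : MvPolynomial (Fin n × Fin m) K)).charpoly).coeff
            (n - a) := by
      have h2 := Matrix.charpoly_map W Δ.toRingHom
      have h5 := congrArg (fun p => p.coeff (n - a)) h2
      simp only [Polynomial.coeff_map] at h5
      have h6 : Δ (W.charpoly.coeff (n - a))
          = (W.map ⇑Δ.toRingHom).charpoly.coeff (n - a) := h5.symm
      rw [h6]
      have h7 : W.map ⇑Δ.toRingHom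
          = Matrix.diagonal fun i => (mon α i : MvPolynomial (Fin n × Fin m) K) := hWΔ
      rw [h7]
    rw [hΔcoeff, charpoly_diagonal]
    have hsub : ∀ i : Fin n, (Polynomial.X : Polynomial (MvPolynomial (Fin n × Fin m) K))
        - Polynomial.C (mon α i) = Polynomial.X + Polynomial.C (- mon α i) := fun i => by
      rw [map_neg, ← sub_eq_add_neg]
    rw [Finset.prod_congr rfl fun i _ => hsub i]
    have hcard : (n - a) ≤ (Finset.univ : Finset (Fin n)).card := by
      rw [Finset.card_univ, Fintype.card_fin]; omega
    rw [Finset.prod_X_add_C_coeff _ _ hcard]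
    have hidx : (Finset.univ : Finset (Fin n)).card - (n - a) = a := by
      rw [Finset.card_univ, Fintype.card_fin]; omega
    rw [hidx]
    have hterm : ∀ t ∈ Finset.powersetCard a (Finset.univ : Finset (Fin n)),
        ∏ i ∈ t, (- mon α i : MvPolynomial (Fin n × Fin m) K)
          = (-1) ^ a * ∏ i ∈ t, (mon α i : MvPolynomial (Fin n × Fin m) K) := by
      intro t ht
      calc ∏ i ∈ t, (- mon α i : MvPolynomial (Fin n × Fin m) K)
          = ∏ i ∈ t, ((-1) * mon α i : MvPolynomial (Fin n × Fin m) K) :=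
            Finset.prod_congr rfl fun i _ => by rw [neg_one_mul]
        _ = (∏ _i ∈ t, (-1 : MvPolynomial (Fin n × Fin m) K)) * ∏ i ∈ t, mon α i :=
            Finset.prod_mul_distrib
        _ = (-1) ^ a * ∏ i ∈ t, mon α i := by
            rw [Finset.prod_const, (Finset.mem_powersetCard.1 ht).2]
    rw [Finset.sum_congr rfl hterm, ← Finset.mul_sum, ← mul_assoc, ← mul_pow]
    have hneg : ((-1 : MvPolynomial (Fin n × Fin m) K) * (-1)) = 1 := by ring
    rw [hneg, one_pow, one_mul, esym]

end Preimage

end Stmt9Aux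


/-- the restrictions of `Δ : A → D` to `A^{GL(n,K)}` and of
`Δ' : A_P → D` to `A_P^{GL(n,K)}` both surject onto the ring of multisymmetric
functions `D^{Sₙ}` (over any commutative ring `K`). -/
theorem stmt9 (K : Type*) [CommRing K] (n m : ℕ)
    (ξ : Fin m → Matrix (Fin n) (Fin n) (MvPolynomial (Fin m × Fin n × Fin n) K))
    (hξ : ξ = fun k => Matrix.of fun i j => MvPolynomial.X (k, i, j))
    (I : Ideal (MvPolynomial (Fin m × Fin n × Fin n) K))
    (hI : I = Ideal.span {a | ∃ k h i j, a = (ξ k * ξ h - ξ h * ξ k) i j})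
    -- the simultaneous-conjugation action of `GL(n,K)` on `A` and the induced
    -- action on `A_P = A/I`
    (c : GL (Fin n) K →
      (MvPolynomial (Fin m × Fin n × Fin n) K →ₐ[K] MvPolynomial (Fin m × Fin n × Fin n) K))
    (hc : ∀ (g : GL (Fin n) K) (p : Fin m × Fin n × Fin n),
      c g (MvPolynomial.X p) =
        ((((g⁻¹ : GL (Fin n) K) : Matrix (Fin n) (Fin n) K).map
            (algebraMap K (MvPolynomial (Fin m × Fin n × Fin n) K)) *
          ξ p.1 *
          ((g : Matrix (Fin n) (Fin n) K)).map
            (algebraMap K (MvPolynomial (Fin m × Fin n × Fin n) K)))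
          p.2.1 p.2.2))
    (cP : GL (Fin n) K →
      ((MvPolynomial (Fin m × Fin n × Fin n) K ⧸ I) →ₐ[K]
        MvPolynomial (Fin m × Fin n × Fin n) K ⧸ I))
    (hcP : ∀ g : GL (Fin n) K,
      (cP g).comp (Ideal.Quotient.mkₐ K I) = (Ideal.Quotient.mkₐ K I).comp (c g))
    (Δ : MvPolynomial (Fin m × Fin n × Fin n) K →ₐ[K] MvPolynomial (Fin n × Fin m) K)
    (hΔ : Δ = MvPolynomial.aeval fun p : Fin m × Fin n × Fin n =>
      if p.2.1 = p.2.2 then MvPolynomial.X (p.2.1, p.1) else 0)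
    (Δ' : (MvPolynomial (Fin m × Fin n × Fin n) K ⧸ I) →ₐ[K]
      MvPolynomial (Fin n × Fin m) K)
    (hΔ' : Δ'.comp (Ideal.Quotient.mkₐ K I) = Δ) :
    ∀ d : MvPolynomial (Fin n × Fin m) K,
      (∀ σ : Equiv.Perm (Fin n),
        MvPolynomial.rename (fun p : Fin n × Fin m => (σ p.1, p.2)) d = d) →
      (∃ a : MvPolynomial (Fin m × Fin n × Fin n) K,
        (∀ g : GL (Fin n) K, c g a = a) ∧ Δ a = d) ∧
      (∃ b : MvPolynomial (Fin m × Fin n × Fin n) K ⧸ I,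
        (∀ g : GL (Fin n) K, cP g b = b) ∧ Δ' b = d) := by
  classical
  intro d hd
  -- the invariant subalgebra `A^{GL(n,K)}`
  let Inv : Subalgebra K (MvPolynomial (Fin m × Fin n × Fin n) K) :=
    { carrier := {x | ∀ g : GL (Fin n) K, c g x = x}
      mul_mem' := fun {x y} hx hy g => by rw [map_mul, hx g, hy g]
      one_mem' := fun g => map_one (c g)
      add_mem' := fun {x y} hx hy g => by rw [map_add, hx g, hy g]
      zero_mem' := fun g => map_zero (c g)
      algebraMap_mem' := fun r g => (c g).commutes r }
  have hgen : Stmt9Aux.genSet (K := K) (n := n) (m := m) ⊆ ↑(Inv.map Δ) := by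
    rintro x ⟨⟨a, α⟩, rfl⟩
    obtain ⟨y, hy1, hy2⟩ := Stmt9Aux.exists_invariant_preimage ξ hξ c hc Δ hΔ a α
    exact ⟨y, hy1, hy2⟩
  have hin : d ∈ Inv.map Δ :=
    Algebra.adjoin_le hgen (Stmt9Aux.invariant_mem_adjoin d hd)
  obtain ⟨x, hxInv, hxd⟩ := hin
  have hxI : ∀ g : GL (Fin n) K, c g x = x := hxInv
  constructor
  · exact ⟨x, hxI, hxd⟩
  · refine ⟨Ideal.Quotient.mkₐ K I x, fun g => ?_, ?_⟩
    · have h1 := AlgHom.congr_fun (hcP g) x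
      simp only [AlgHom.comp_apply] at h1
      rw [h1, hxI g]
    · have h2 := AlgHom.congr_fun hΔ' x
      simp only [AlgHom.comp_apply] at h2
      rw [h2]
      exact hxd
end

section
/- Let K be an infinite field, let X ⊆ Mat(n, \bar{K})^m be the variety of m-tuples of pairwise commuting matrices, and let f be a GL(n)-invariant regular function on X that vanishes on all m-tuples of diagonal matrices. Then f vanishes identically on X. -/
open MvPolynomial Matrix Module FiniteDimensional Submodule

section aux
variable {F : Type*} [Field F] [IsAlgClosed F]

/-- Common eigenvector for a commuting family. -/
lemma aux_common_eig {V : Type*} [AddCommGroup V] [Module F V]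
    [FiniteDimensional F V] [Nontrivial V] (m : ℕ) (f : Fin m → Module.End F V)
    (h : ∀ k l, Commute (f k) (f l)) :
    ∃ μ : Fin m → F, (⨅ k, Module.End.eigenspace (f k) (μ k)) ≠ ⊥ := by
  induction m with
  | zero =>
      refine ⟨Fin.elim0, ?_⟩
      rw [iInf_of_empty]
      exact top_ne_bot
  | succ m ih =>
      obtain ⟨μ, hW⟩ := ih (fun k => f k.castSucc) (fun k l => h _ _)
      set W := ⨅ k, Module.End.eigenspace (f (Fin.castSucc k)) (μ k) with hWdef
      have hmaps : ∀ x ∈ W, f (Fin.last m) x ∈ W := by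
        intro x hx
        rw [hWdef, Submodule.mem_iInf] at hx ⊢
        intro k
        have hx' := fun i => Module.End.mem_eigenspace_iff.mp (hx i)
        rw [Module.End.mem_eigenspace_iff]
        have hcomm := (h (Fin.last m) k.castSucc).symm.eq
        calc f k.castSucc (f (Fin.last m) x)
            = (f k.castSucc * f (Fin.last m)) x := rfl
          _ = (f (Fin.last m) * f k.castSucc) x := by rw [hcomm]
          _ = f (Fin.last m) (f k.castSucc x) := rfl
          _ = μ k • f (Fin.last m) x := by rw [hx' k, _root_.map_smul]
      haveI : Nontrivial W := Submodule.nontrivial_iff_ne_bot.mpr hW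
      set g : Module.End F W := (f (Fin.last m)).restrict hmaps with hgdef
      obtain ⟨c, hc⟩ := Module.End.exists_eigenvalue g
      obtain ⟨w, hw⟩ := hc.exists_hasEigenvector
      refine ⟨Fin.snoc μ c, Submodule.ne_bot_iff _ |>.mpr ⟨(w : V), ?_, by
        simpa using hw.right⟩⟩
      rw [Submodule.mem_iInf]
      intro k
      induction k using Fin.lastCases with
      | last =>
          rw [Module.End.mem_eigenspace_iff, Fin.snoc_last]
          have := hw.apply_eq_smul
          calc f (Fin.last m) (w : V) = ((g w : W) : V) := rfl
            _ = c • (w : V) := by rw [this]; rfl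
      | cast k =>
          rw [Fin.snoc_castSucc]
          exact (Submodule.mem_iInf _).mp w.2 k

/-- Simultaneous triangularizing basis for a commuting family. -/
lemma aux_tri_basis : ∀ (n : ℕ) (V : Type u_0) [AddCommGroup V] [Module F V]
    [FiniteDimensional F V], Module.finrank F V = n →
    ∀ (m : ℕ) (f : Fin m → Module.End F V), (∀ k l, Commute (f k) (f l)) →
    ∃ b : Basis (Fin n) F V, ∀ k j, f k (b j) ∈ Submodule.span F (⇑b '' Set.Iic j) := by
  intro n
  induction n with
  | zero =>
      intro V _ _ _ hn m f hf
      haveI : Subsingleton V := Module.finrank_zero_iff.mp hn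
      exact ⟨Basis.empty V, fun k j => j.elim0⟩
  | succ n ih =>
      intro V _ _ _ hn m f hf
      haveI : Nontrivial V := Module.nontrivial_of_finrank_pos (by omega : 0 < Module.finrank F V)
      obtain ⟨μ, hW⟩ := aux_common_eig m f hf
      obtain ⟨v, hvW, hv0⟩ := Submodule.ne_bot_iff _ |>.mp hW
      have hv : ∀ k, f k v = μ k • v := by
        intro k
        exact Module.End.mem_eigenspace_iff.mp ((Submodule.mem_iInf _).mp hvW k)
      set L : Submodule F V := F ∙ v with hLdef
      have hvL : v ∈ L := Submodule.mem_span_singleton_self v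
      have hL : ∀ k, L ≤ L.comap (f k) := by
        intro k
        rw [hLdef, Submodule.span_le]
        rintro x hx
        rw [Set.mem_singleton_iff] at hx
        subst hx
        simp only [SetLike.mem_coe, Submodule.mem_comap, hv k]
        exact Submodule.smul_mem _ _ (Submodule.mem_span_singleton_self x)
      have hQ : Module.finrank F (V ⧸ L) = n := by
        have h1 := Submodule.finrank_quotient_add_finrank L
        rw [finrank_span_singleton hv0, hn] at h1
        omega
      set f' : Fin m → Module.End F (V ⧸ L) := fun k => Submodule.mapQ L L (f k) (hL k)
        with hf'def
      have hf'mk : ∀ k x, f' k (Submodule.Quotient.mk x) = Submodule.Quotient.mk (f k x) :=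
        fun k x => Submodule.mapQ_apply L L (f k) x
      have hf' : ∀ k l, Commute (f' k) (f' l) := by
        intro k l
        apply LinearMap.ext
        intro q
        obtain ⟨x, rfl⟩ := Submodule.Quotient.mk_surjective L q
        simp only [Module.End.mul_apply, hf'mk]
        congr 1
        calc f k (f l x) = (f k * f l) x := rfl
          _ = (f l * f k) x := by rw [(hf k l).eq]
          _ = f l (f k x) := rfl
      obtain ⟨c, hc⟩ := ih (V ⧸ L) hQ m f' hf'
      have hu : ∀ i, ∃ x : V, Submodule.Quotient.mk x = c i :=
        fun i => Submodule.Quotient.mk_surjective L (c i)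
      choose u hu using hu
      set b0 : Fin (n + 1) → V := Fin.cons v u with hb0def
      have hmks : ∀ a : Fin (n + 1) → F,
          Submodule.Quotient.mk (p := L) (∑ i : Fin n, a i.succ • u i)
            = ∑ i : Fin n, a i.succ • c i := by
        intro a
        rw [← Submodule.mkQ_apply, map_sum]
        exact Finset.sum_congr rfl fun i _ => by
          rw [_root_.map_smul, Submodule.mkQ_apply, hu i]
      have hli : LinearIndependent F b0 := by
        rw [Fintype.linearIndependent_iff]
        intro a ha
        rw [Fin.sum_univ_succ] at ha
        simp only [hb0def, Fin.cons_zero, Fin.cons_succ] at ha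
        have ha' := congrArg (Submodule.Quotient.mk (p := L)) ha
        rw [Submodule.Quotient.mk_add] at ha'
        have hv0' : (Submodule.Quotient.mk (p := L) (a 0 • v)) = 0 := by
          rw [Submodule.Quotient.mk_eq_zero]
          exact Submodule.smul_mem _ _ hvL
        rw [hv0', zero_add, Submodule.Quotient.mk_zero] at ha'
        have hsum : (∑ i : Fin n, a i.succ • c i) = 0 := by rw [← hmks a, ha']
        have hzero : ∀ i : Fin n, a i.succ = 0 :=
          Fintype.linearIndependent_iff.mp c.linearIndependent (fun i => a i.succ) hsum
        intro i
        induction i using Fin.cases with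
        | zero =>
            have hzsum : (∑ i : Fin n, a i.succ • u i) = 0 :=
              Finset.sum_eq_zero fun i _ => by rw [hzero i, zero_smul]
            rw [hzsum, add_zero] at ha
            rcases smul_eq_zero.mp ha with h | h
            · exact h
            · exact absurd h hv0
        | succ i => exact hzero i
      have hcard : Fintype.card (Fin (n + 1)) = Module.finrank F V := by
        simp [hn]
      set b := basisOfLinearIndependentOfCardEqFinrank hli hcard with hbdef
      have hb : ⇑b = b0 := coe_basisOfLinearIndependentOfCardEqFinrank hli hcard
      refine ⟨b, ?_⟩
      intro k j
      rw [hb]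
      induction j using Fin.cases with
      | zero =>
          have hb00 : b0 0 = v := by simp [hb0def]
          rw [hb00, hv k]
          exact Submodule.smul_mem _ _ (Submodule.subset_span ⟨0, Set.mem_Iic.mpr le_rfl, hb00⟩)
      | succ j =>
          have h2 : f' k (c j) ∈ Submodule.span F (⇑c '' Set.Iic j) := hc k j
          have himg : ⇑c '' Set.Iic j = ⇑L.mkQ '' (u '' Set.Iic j) := by
            rw [Set.image_image]
            apply Set.image_congr
            intro i _
            rw [Submodule.mkQ_apply, hu i]
          rw [himg, Submodule.span_image] at h2
          obtain ⟨z, hz, hz2⟩ := h2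
          have hker : f k (u j) - z ∈ L := by
            rw [← Submodule.ker_mkQ L, LinearMap.mem_ker, map_sub]
            have e1 : L.mkQ (f k (u j)) = f' k (c j) := by
              rw [Submodule.mkQ_apply, ← hf'mk, hu j]
            rw [e1, hz2, sub_self]
          have hsub1 : Submodule.span F (u '' Set.Iic j) ≤
              Submodule.span F (b0 '' Set.Iic j.succ) := by
            apply Submodule.span_mono
            rintro _ ⟨i, hi, rfl⟩
            exact ⟨i.succ, Fin.succ_le_succ_iff.mpr hi, by simp [hb0def]⟩
          have hsub2 : L ≤ Submodule.span F (b0 '' Set.Iic j.succ) := by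
            rw [hLdef, Submodule.span_le]
            rintro x hx
            rw [Set.mem_singleton_iff] at hx
            subst hx
            exact Submodule.subset_span ⟨0, Fin.zero_le _, by simp [hb0def]⟩
          have heq : f k (b0 j.succ) = z + (f k (u j) - z) := by
            rw [show b0 j.succ = u j by simp [hb0def]]
            abel
          rw [heq]
          exact Submodule.add_mem _ (hsub1 hz) (hsub2 hker)

/-- Simultaneous triangularization for commuting matrices over an alg. closed field. -/
lemma aux_tri_mat (n m : ℕ) (M : Fin m → Matrix (Fin n) (Fin n) F)
    (h : ∀ k l, Commute (M k) (M l)) :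
    ∃ g : (Matrix (Fin n) (Fin n) F)ˣ, ∀ k (i j : Fin n), j < i →
      ((g : Matrix (Fin n) (Fin n) F) * M k *
        ((g⁻¹ : (Matrix (Fin n) (Fin n) F)ˣ) : Matrix (Fin n) (Fin n) F)) i j = 0 := by
  set V := Fin n → F
  set φ : Fin m → Module.End F V := fun k => Matrix.toLin' (M k) with hφdef
  have hφcomm : ∀ k l, Commute (φ k) (φ l) := by
    intro k l
    show φ k * φ l = φ l * φ k
    rw [Module.End.mul_eq_comp, Module.End.mul_eq_comp, hφdef]
    simp only
    rw [← Matrix.toLin'_mul, ← Matrix.toLin'_mul, (h k l).eq]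
  have hrank : Module.finrank F V = n := Module.finrank_fin_fun F
  obtain ⟨b, hb⟩ := aux_tri_basis n V hrank m φ hφcomm
  set e := Pi.basisFun F (Fin n) with hedef
  refine ⟨⟨b.toMatrix e, e.toMatrix b, Basis.toMatrix_mul_toMatrix_flip b e,
    Basis.toMatrix_mul_toMatrix_flip e b⟩, ?_⟩
  intro k i j hij
  have key : b.toMatrix e * M k * e.toMatrix b = LinearMap.toMatrix b b (φ k) := by
    have h1 : LinearMap.toMatrix e e (φ k) = M k := by
      rw [hedef, LinearMap.toMatrix_eq_toMatrix', hφdef]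
      exact LinearMap.toMatrix'_toLin' (M k)
    rw [← h1]
    exact basis_toMatrix_mul_linearMap_toMatrix_mul_basis_toMatrix b e b e (φ k)
  show (b.toMatrix e * M k * e.toMatrix b) i j = 0
  rw [key, LinearMap.toMatrix_apply]
  have hmem : φ k (b j) ∈ Submodule.span F (⇑b '' Set.Iic j) := hb k j
  rw [Basis.mem_span_image] at hmem
  by_contra hne
  exact absurd (hmem (Finsupp.mem_support_iff.mpr hne)) (by simp [hij.not_ge])

end aux

lemma aux_conj_commute {α : Type*} [Monoid α] (g : αˣ) {A B : α} (h : Commute A B) :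
    Commute ((g : α) * A * ((g⁻¹ : αˣ) : α)) ((g : α) * B * ((g⁻¹ : αˣ) : α)) := by
  show ((g : α) * A * ((g⁻¹ : αˣ) : α)) * ((g : α) * B * ((g⁻¹ : αˣ) : α))
      = ((g : α) * B * ((g⁻¹ : αˣ) : α)) * ((g : α) * A * ((g⁻¹ : αˣ) : α))
  simp only [mul_assoc, Units.inv_mul_cancel_left]
  rw [← mul_assoc A B, ← mul_assoc B A, h.eq]

lemma aux_main (F : Type*) [Field F] [IsAlgClosed F] [Infinite F] (n m : ℕ)
    (f : MvPolynomial (Fin m × Fin n × Fin n) F)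
    (hinv : ∀ (g : (Matrix (Fin n) (Fin n) F)ˣ)
        (M : Fin m → Matrix (Fin n) (Fin n) F),
      (∀ k l, Commute (M k) (M l)) →
      MvPolynomial.eval
        (fun p : Fin m × Fin n × Fin n =>
          ((g : Matrix (Fin n) (Fin n) F) * M p.1 *
            ((g⁻¹ : (Matrix (Fin n) (Fin n) F)ˣ) :
              Matrix (Fin n) (Fin n) F)) p.2.1 p.2.2) f =
      MvPolynomial.eval (fun p : Fin m × Fin n × Fin n => M p.1 p.2.1 p.2.2) f)
    (hdiag : ∀ d : Fin m → (Fin n → F),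
      MvPolynomial.eval
        (fun p : Fin m × Fin n × Fin n =>
          Matrix.diagonal (d p.1) p.2.1 p.2.2) f = 0) :
    ∀ M : Fin m → Matrix (Fin n) (Fin n) F,
      (∀ k l, Commute (M k) (M l)) →
      MvPolynomial.eval (fun p : Fin m × Fin n × Fin n => M p.1 p.2.1 p.2.2) f = 0 := by
  intro M hcomm
  obtain ⟨g, hg⟩ := aux_tri_mat n m M hcomm
  set T : Fin m → Matrix (Fin n) (Fin n) F :=
    fun k => (g : Matrix (Fin n) (Fin n) F) * M k *
      ((g⁻¹ : (Matrix (Fin n) (Fin n) F)ˣ) : Matrix (Fin n) (Fin n) F) with hTdef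
  have hgT : ∀ k (i j : Fin n), j < i → T k i j = 0 := by
    intro k i j hij
    simp only [hTdef]
    exact hg k i j hij
  have hfM : MvPolynomial.eval (fun p : Fin m × Fin n × Fin n => T p.1 p.2.1 p.2.2) f
      = MvPolynomial.eval (fun p : Fin m × Fin n × Fin n => M p.1 p.2.1 p.2.2) f := by
    simp only [hTdef]
    exact hinv g M hcomm
  have hTcomm : ∀ k l, Commute (T k) (T l) := by
    intro k l
    simp only [hTdef]
    exact aux_conj_commute g (hcomm k l)
  set P : Polynomial F := MvPolynomial.eval₂ (Polynomial.C)
    (fun p : Fin m × Fin n × Fin n =>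
      Polynomial.C (T p.1 p.2.1 p.2.2) * Polynomial.X ^ ((p.2.2 : ℕ) - (p.2.1 : ℕ))) f
    with hPdef
  have hPt : ∀ t : F, P.eval t = MvPolynomial.eval
      (fun p : Fin m × Fin n × Fin n =>
        T p.1 p.2.1 p.2.2 * t ^ ((p.2.2 : ℕ) - (p.2.1 : ℕ))) f := by
    intro t
    have h1 : P.eval t = Polynomial.evalRingHom t (MvPolynomial.eval₂ (Polynomial.C)
        (fun p : Fin m × Fin n × Fin n =>
          Polynomial.C (T p.1 p.2.1 p.2.2) * Polynomial.X ^ ((p.2.2 : ℕ) - (p.2.1 : ℕ))) f) :=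
      rfl
    rw [h1, MvPolynomial.eval₂_comp_left]
    have h2 : (Polynomial.evalRingHom t).comp (Polynomial.C : F →+* Polynomial F)
        = RingHom.id F := by
      ext a
      simp
    rw [h2, MvPolynomial.eval₂_id]
    have hfun : (⇑(Polynomial.evalRingHom t) ∘ (fun p : Fin m × Fin n × Fin n =>
          Polynomial.C (T p.1 p.2.1 p.2.2) * Polynomial.X ^ ((p.2.2 : ℕ) - (p.2.1 : ℕ))))
        = fun p : Fin m × Fin n × Fin n =>
            T p.1 p.2.1 p.2.2 * t ^ ((p.2.2 : ℕ) - (p.2.1 : ℕ)) := by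
      funext p
      simp
    rw [hfun]
  have hconst : ∀ t : F, t ≠ 0 → P.eval t
      = MvPolynomial.eval (fun p : Fin m × Fin n × Fin n => T p.1 p.2.1 p.2.2) f := by
    intro t ht
    rw [hPt t]
    set d : Fin n → F := fun i => t ^ (n - (i : ℕ)) with hddef
    have hd0 : ∀ i, d i ≠ 0 := fun i => pow_ne_zero _ ht
    have hDmul : Matrix.diagonal d * Matrix.diagonal (fun i => (d i)⁻¹) = 1 := by
      rw [Matrix.diagonal_mul_diagonal,
        show ((fun i => d i * (d i)⁻¹) : Fin n → F) = fun _ => (1 : F) from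
          funext fun i => mul_inv_cancel₀ (hd0 i), Matrix.diagonal_one]
    have hDmul' : Matrix.diagonal (fun i => (d i)⁻¹) * Matrix.diagonal d = 1 := by
      rw [Matrix.diagonal_mul_diagonal,
        show ((fun i => (d i)⁻¹ * d i) : Fin n → F) = fun _ => (1 : F) from
          funext fun i => inv_mul_cancel₀ (hd0 i), Matrix.diagonal_one]
    have hD := hinv ⟨Matrix.diagonal d, Matrix.diagonal (fun i => (d i)⁻¹), hDmul, hDmul'⟩
      T hTcomm
    rw [← hD]
    have hfun : (fun p : Fin m × Fin n × Fin n =>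
          T p.1 p.2.1 p.2.2 * t ^ ((p.2.2 : ℕ) - (p.2.1 : ℕ)))
        = fun p : Fin m × Fin n × Fin n =>
            (Matrix.diagonal d * T p.1 * Matrix.diagonal (fun i => (d i)⁻¹)) p.2.1 p.2.2 := by
      funext p
      obtain ⟨k, ij⟩ := p
      obtain ⟨i, j⟩ := ij
      show T k i j * t ^ ((j : ℕ) - (i : ℕ))
        = (Matrix.diagonal d * T k * Matrix.diagonal (fun i => (d i)⁻¹)) i j
      rw [Matrix.mul_diagonal, Matrix.diagonal_mul]
      by_cases hz : T k i j = 0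
      · rw [hz]
        ring
      · have hle : (i : ℕ) ≤ (j : ℕ) := by
          by_contra hlt
          exact hz (hgT k i j (by omega))
        have hj := j.isLt
        have hpow : d i = d j * t ^ ((j : ℕ) - (i : ℕ)) := by
          simp only [hddef]
          rw [← pow_add]
          congr 1
          omega
        rw [hpow]
        have hend : d j * t ^ ((j : ℕ) - (i : ℕ)) * T k i j * (d j)⁻¹
            = T k i j * t ^ ((j : ℕ) - (i : ℕ)) * (d j * (d j)⁻¹) := by ring
        rw [hend, mul_inv_cancel₀ (hd0 j), mul_one]
    rw [hfun]
    rfl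
  have hev0 : P.eval 0 = 0 := by
    rw [hPt 0]
    have heq : (fun p : Fin m × Fin n × Fin n =>
        T p.1 p.2.1 p.2.2 * (0 : F) ^ ((p.2.2 : ℕ) - (p.2.1 : ℕ)))
        = fun p : Fin m × Fin n × Fin n =>
            Matrix.diagonal (fun i => T p.1 i i) p.2.1 p.2.2 := by
      funext p
      obtain ⟨k, ij⟩ := p
      obtain ⟨i, j⟩ := ij
      show T k i j * (0 : F) ^ ((j : ℕ) - (i : ℕ)) = Matrix.diagonal (fun i' => T k i' i') i j
      rcases eq_or_ne i j with rfl | hne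
      · rw [Matrix.diagonal_apply_eq, Nat.sub_self, pow_zero, mul_one]
      · rw [Matrix.diagonal_apply_ne _ hne]
        rcases lt_or_gt_of_ne hne with hlt | hgt
        · have h' : (i : ℕ) < (j : ℕ) := hlt
          rw [zero_pow (by omega : (j : ℕ) - (i : ℕ) ≠ 0), mul_zero]
        · rw [hgT k i j hgt, zero_mul]
    rw [heq]
    exact hdiag (fun k i => T k i i)
  have hsub : P - Polynomial.C
      (MvPolynomial.eval (fun p : Fin m × Fin n × Fin n => T p.1 p.2.1 p.2.2) f) = 0 := by
    apply Polynomial.eq_zero_of_infinite_isRoot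
    have hinf : ({(0 : F)}ᶜ : Set F).Infinite := (Set.finite_singleton 0).infinite_compl
    refine hinf.mono fun t ht => ?_
    have ht' : t ≠ 0 := ht
    simp only [Set.mem_setOf_eq, Polynomial.IsRoot.def, Polynomial.eval_sub, Polynomial.eval_C]
    rw [hconst t ht', sub_self]
  rw [sub_eq_zero] at hsub
  have hfinal := congrArg (Polynomial.eval 0) hsub
  rw [hev0, Polynomial.eval_C] at hfinal
  rw [← hfM]
  exact hfinal.symm

/-- let `K` be an infinite field, `K̄` its algebraic closure, and let
`X ⊆ Mat(n,K̄)^m` be the variety of `m`-tuples of pairwise commuting matrices. If a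
`GL(n)`-invariant regular (polynomial) function `f` on `X` vanishes on all `m`-tuples
of diagonal matrices, then `f` vanishes identically on `X`. -/
theorem stmt14 (K : Type*) [Field K] [Infinite K] (n m : ℕ)
    (f : MvPolynomial (Fin m × Fin n × Fin n) (AlgebraicClosure K))
    (hinv : ∀ (g : GL (Fin n) (AlgebraicClosure K))
        (M : Fin m → Matrix (Fin n) (Fin n) (AlgebraicClosure K)),
      (∀ k l, Commute (M k) (M l)) →
      MvPolynomial.eval
        (fun p : Fin m × Fin n × Fin n =>
          ((g : Matrix (Fin n) (Fin n) (AlgebraicClosure K)) * M p.1 *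
            ((g⁻¹ : GL (Fin n) (AlgebraicClosure K)) :
              Matrix (Fin n) (Fin n) (AlgebraicClosure K))) p.2.1 p.2.2) f =
      MvPolynomial.eval (fun p : Fin m × Fin n × Fin n => M p.1 p.2.1 p.2.2) f)
    (hdiag : ∀ d : Fin m → (Fin n → AlgebraicClosure K),
      MvPolynomial.eval
        (fun p : Fin m × Fin n × Fin n =>
          Matrix.diagonal (d p.1) p.2.1 p.2.2) f = 0) :
    ∀ M : Fin m → Matrix (Fin n) (Fin n) (AlgebraicClosure K),
      (∀ k l, Commute (M k) (M l)) →
      MvPolynomial.eval (fun p : Fin m × Fin n × Fin n => M p.1 p.2.1 p.2.2) f = 0 := by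
  haveI : Infinite (AlgebraicClosure K) :=
    Infinite.of_injective (algebraMap K (AlgebraicClosure K))
      (algebraMap K (AlgebraicClosure K)).injective
  exact aux_main (AlgebraicClosure K) n m f hinv hdiag
end
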